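/- arXiv:1608.03758 — 6 statements merged into one kernel-verified Lean document; each statement's English description precedes it below -/
import Mathlib

section
/- Let X, Y, Z be complex Banach spaces and let A : X → Y and B : Y → Z be bounded linear operators with B ∘ A = 0. Then the following two conditions are equivalent: (i) the quotient vector space ker(B)/range(A) is finite-dimensional and range(B) is a closed subspace of Z; (ii) the quotient vector space ker(A*)/range(B*) is finite-dimensional and range(A*) is a closed subspace of X', where A* : Y' → X' and B* : Z' → Y' denote the dual (transpose) operators. -/
open Metric Set Filter Function ContinuousLinearMap
open scoped Topology

set_option maxHeartbeats 1600000

/-- The dual (transpose) operator of a bounded linear operator `T : X → Y`,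
sending a continuous linear functional `g` on `Y` to `g ∘ T`. -/
noncomputable def dualOp {X Y : Type*} [NormedAddCommGroup X] [NormedSpace ℂ X]
    [NormedAddCommGroup Y] [NormedSpace ℂ Y] (T : X →L[ℂ] Y) :
    StrongDual ℂ Y →L[ℂ] StrongDual ℂ X :=
  (ContinuousLinearMap.compL ℂ X Y ℂ).flip T

namespace Stmt0Aux

variable {E F : Type*} [NormedAddCommGroup E] [NormedSpace ℂ E]
  [NormedAddCommGroup F] [NormedSpace ℂ F]

@[simp] lemma dualOp_apply (T : E →L[ℂ] F) (g : StrongDual ℂ F) (x : E) :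
    dualOp T g x = g (T x) := rfl

/-- Continuous lift of a continuous linear map along a quotient by a submodule of its kernel. -/
noncomputable def cLiftQ (p : Submodule ℂ E) (T : E →L[ℂ] F) (h : p ≤ LinearMap.ker T.toLinearMap) :
    (E ⧸ p) →L[ℂ] F :=
  (p.liftQ (T : E →ₗ[ℂ] F) h).mkContinuous ‖T‖ (by
    intro m
    refine le_of_forall_pos_le_add (fun ε hε => ?_)
    have hδ : 0 < ε / (‖T‖ + 1) := div_pos hε (by positivity)
    obtain ⟨x, hx, hxn⟩ := Submodule.Quotient.norm_mk_lt m hδ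
    have hval : ‖(p.liftQ (T : E →ₗ[ℂ] F) h) m‖ = ‖T x‖ := by rw [← hx, Submodule.liftQ_apply]; rfl
    rw [hval]
    calc ‖T x‖ ≤ ‖T‖ * ‖x‖ := T.le_opNorm x
      _ ≤ ‖T‖ * (‖m‖ + ε / (‖T‖ + 1)) := by
          apply mul_le_mul_of_nonneg_left (le_of_lt hxn) (norm_nonneg T)
      _ = ‖T‖ * ‖m‖ + ‖T‖ * (ε / (‖T‖ + 1)) := by ring
      _ ≤ ‖T‖ * ‖m‖ + ε := by
          gcongr
          rw [mul_div_assoc']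
          rw [div_le_iff₀ (by positivity)]
          nlinarith [norm_nonneg T])

@[simp] lemma cLiftQ_mk (p : Submodule ℂ E) (T : E →L[ℂ] F) (h : p ≤ LinearMap.ker T.toLinearMap) (x : E) :
    cLiftQ p T h (Submodule.Quotient.mk x) = T x := by
  simp [cLiftQ]

lemma ker_cLiftQ_eq_bot (T : E →L[ℂ] F) :
    LinearMap.ker (cLiftQ (LinearMap.ker T.toLinearMap) T le_rfl).toLinearMap = ⊥ := by
  rw [LinearMap.ker_eq_bot']
  intro m hm
  obtain ⟨x, rfl⟩ := Submodule.Quotient.mk_surjective _ m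
  rw [ContinuousLinearMap.coe_coe, cLiftQ_mk] at hm
  simpa [Submodule.Quotient.mk_eq_zero] using hm

lemma range_cLiftQ (p : Submodule ℂ E) (T : E →L[ℂ] F) (h : p ≤ LinearMap.ker T.toLinearMap) :
    LinearMap.range (cLiftQ p T h).toLinearMap = LinearMap.range T.toLinearMap := by
  apply le_antisymm
  · rintro y ⟨m, rfl⟩
    obtain ⟨x, rfl⟩ := Submodule.Quotient.mk_surjective p m
    exact ⟨x, (cLiftQ_mk p T h x).symm⟩
  · rintro y ⟨x, rfl⟩
    exact ⟨Submodule.Quotient.mk x, cLiftQ_mk p T h x⟩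

/-- The quotient map as a continuous linear map. -/
noncomputable def mkCLM (M : Submodule ℂ F) : F →L[ℂ] (F ⧸ M) :=
  M.mkQ.mkContinuous 1 (fun x => by
    simpa using Submodule.Quotient.norm_mk_le M x)

@[simp] lemma mkCLM_apply (M : Submodule ℂ F) (x : F) :
    mkCLM M x = Submodule.Quotient.mk x := rfl

/-- Hahn–Banach separation of a point from a closed subspace. -/
theorem exists_dual_separating (M : Submodule ℂ F) (hM : IsClosed (M : Set F)) {y : F}
    (hy : y ∉ M) : ∃ g : F →L[ℂ] ℂ, (∀ m ∈ M, g m = 0) ∧ g y ≠ 0 := by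
  haveI := hM
  have hq : (Submodule.Quotient.mk y : F ⧸ M) ≠ 0 := by
    simpa [Submodule.Quotient.mk_eq_zero] using hy
  obtain ⟨g', hg'1, hg'2⟩ := exists_dual_vector ℂ (Submodule.Quotient.mk y : F ⧸ M) (norm_ne_zero_iff.2 hq)
  refine ⟨g'.comp (mkCLM M), fun m hm => ?_, ?_⟩
  · have : (Submodule.Quotient.mk m : F ⧸ M) = 0 := (Submodule.Quotient.mk_eq_zero M).2 hm
    simp [this]
  · have : g' (Submodule.Quotient.mk y) = ‖(Submodule.Quotient.mk y : F ⧸ M)‖ := hg'2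
    simp only [ContinuousLinearMap.comp_apply, mkCLM_apply, this]
    exact_mod_cast (norm_ne_zero_iff.2 hq)

section Banach

variable [CompleteSpace E]

/-- Completeness iteration: approximate controlled preimages give surjectivity. -/
theorem surjective_of_approx (f : E →L[ℂ] F) (C : ℝ) (C0 : 0 ≤ C)
    (hC : ∀ y, ∃ x, dist (f x) y ≤ 1 / 2 * ‖y‖ ∧ ‖x‖ ≤ C * ‖y‖) :
    Function.Surjective f := by
  choose g hg using hC
  let h y := y - f (g y)
  have hle : ∀ y, ‖h y‖ ≤ 1 / 2 * ‖y‖ := by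
    intro y
    rw [← dist_eq_norm, dist_comm]
    exact (hg y).1
  intro y
  have hnle : ∀ n : ℕ, ‖h^[n] y‖ ≤ (1 / 2) ^ n * ‖y‖ := by
    intro n
    induction n with
    | zero => simp only [one_div, one_mul, iterate_zero_apply, pow_zero, le_rfl]
    | succ n IH =>
      rw [iterate_succ']
      apply le_trans (hle _) _
      rw [pow_succ', mul_assoc]
      gcongr
  let u n := g (h^[n] y)
  have ule : ∀ n, ‖u n‖ ≤ (1 / 2) ^ n * (C * ‖y‖) := fun n ↦ by
    apply le_trans (hg _).2
    calc
      C * ‖h^[n] y‖ ≤ C * ((1 / 2) ^ n * ‖y‖) := mul_le_mul_of_nonneg_left (hnle n) C0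
      _ = (1 / 2) ^ n * (C * ‖y‖) := by ring
  have sNu : Summable fun n => ‖u n‖ := by
    refine .of_nonneg_of_le (fun n => norm_nonneg _) ule ?_
    exact Summable.mul_right _ (summable_geometric_of_lt_one (by norm_num) (by norm_num))
  have su : Summable u := sNu.of_norm
  let x := tsum u
  have fsumeq : ∀ n : ℕ, f (∑ i ∈ Finset.range n, u i) = y - h^[n] y := by
    intro n
    induction n with
    | zero => simp [f.map_zero]
    | succ n IH => rw [Finset.sum_range_succ, f.map_add, IH, iterate_succ_apply', sub_add]
  have : Tendsto (fun n => ∑ i ∈ Finset.range n, u i) atTop (𝓝 x) := su.hasSum.tendsto_sum_nat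
  have L₁ : Tendsto (fun n => f (∑ i ∈ Finset.range n, u i)) atTop (𝓝 (f x)) :=
    (f.continuous.tendsto _).comp this
  simp only [fsumeq] at L₁
  have L₂ : Tendsto (fun n => y - h^[n] y) atTop (𝓝 (y - 0)) := by
    refine tendsto_const_nhds.sub ?_
    rw [tendsto_iff_norm_sub_tendsto_zero]
    simp only [sub_zero]
    refine squeeze_zero (fun _ => norm_nonneg _) hnle ?_
    rw [← zero_mul ‖y‖]
    refine (tendsto_pow_atTop_nhds_zero_of_lt_one ?_ ?_).mul tendsto_const_nhds <;> norm_num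
  have feq : f x = y - 0 := tendsto_nhds_unique L₁ L₂
  rw [sub_zero] at feq
  exact ⟨x, feq⟩

/-- If the range of `T` has finite codimension in a closed subspace `M` containing it,
then the range of `T` is closed. -/
theorem isClosed_range_of_quot_findim [CompleteSpace F]
    (T : E →L[ℂ] F) (M : Submodule ℂ F) (hM : IsClosed (M : Set F))
    (hle : LinearMap.range T.toLinearMap ≤ M)
    (hfd : FiniteDimensional ℂ (↥M ⧸ Submodule.comap M.subtype (LinearMap.range T.toLinearMap))) :
    IsClosed (LinearMap.range T.toLinearMap : Set F) := by
  haveI : CompleteSpace ↥M := hM.completeSpace_coe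
  set T' : E →L[ℂ] ↥M := T.codRestrict M (fun x => hle ⟨x, rfl⟩) with hT'
  haveI : IsClosed ((LinearMap.ker T'.toLinearMap : Submodule ℂ E) : Set E) := ContinuousLinearMap.isClosed_ker T'
  set g : (E ⧸ LinearMap.ker T'.toLinearMap) →L[ℂ] ↥M := cLiftQ (LinearMap.ker T'.toLinearMap) T' le_rfl with hgdef
  have hker : LinearMap.ker g.toLinearMap = ⊥ := ker_cLiftQ_eq_bot T'
  have hrange : LinearMap.range g.toLinearMap = Submodule.comap M.subtype (LinearMap.range T.toLinearMap) := by
    rw [range_cLiftQ]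
    ext m
    simp only [LinearMap.mem_range, Submodule.mem_comap, Submodule.coe_subtype]
    constructor
    · rintro ⟨x, rfl⟩; exact ⟨x, rfl⟩
    · rintro ⟨x, hx⟩; exact ⟨x, Subtype.ext hx⟩
  haveI hfd' : FiniteDimensional ℂ (↥M ⧸ LinearMap.range g.toLinearMap) := hrange ▸ hfd
  obtain ⟨G, hG⟩ := Submodule.exists_isCompl (LinearMap.range g.toLinearMap)
  haveI : FiniteDimensional ℂ G :=
    LinearEquiv.finiteDimensional (Submodule.quotientEquivOfIsCompl _ G hG)
  have hGc : IsClosed (G : Set ↥M) := G.closed_of_finiteDimensional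
  have hclosed : IsClosed ((LinearMap.range g.toLinearMap : Submodule ℂ ↥M) : Set ↥M) :=
    g.closed_complemented_range_of_isCompl_of_ker_eq_bot G hG hGc hker
  have hset : (LinearMap.range T.toLinearMap : Set F) = Subtype.val '' ((LinearMap.range g.toLinearMap : Submodule ℂ ↥M) : Set ↥M) := by
    ext y
    constructor
    · rintro ⟨x, rfl⟩
      refine ⟨T' x, ?_, rfl⟩
      exact ⟨Submodule.Quotient.mk x, cLiftQ_mk _ _ _ x⟩
    · rintro ⟨m, hm, rfl⟩
      rw [hrange] at hm
      exact hm
  rw [hset]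
  exact hM.isClosedEmbedding_subtypeVal.isClosedMap _ hclosed

/-- If `T` has closed range, any functional vanishing on `ker T` is in the range of `dualOp T`. -/
theorem exists_dual_preimage [CompleteSpace F] (T : E →L[ℂ] F)
    (hR : IsClosed ((LinearMap.range T.toLinearMap : Submodule ℂ F) : Set F)) (g : E →L[ℂ] ℂ)
    (hg : ∀ x ∈ LinearMap.ker T.toLinearMap, g x = 0) : ∃ h : StrongDual ℂ F, dualOp T h = g := by
  set R := LinearMap.range T.toLinearMap with hRdef
  haveI : CompleteSpace ↥R := hR.completeSpace_coe
  set T' : E →L[ℂ] ↥R := T.codRestrict R (fun x => ⟨x, rfl⟩) with hT'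
  have hsurj : Function.Surjective T' := by
    rintro ⟨y, x, rfl⟩
    exact ⟨x, rfl⟩
  haveI : IsClosed ((LinearMap.ker T'.toLinearMap : Submodule ℂ E) : Set E) := ContinuousLinearMap.isClosed_ker T'
  set q : (E ⧸ LinearMap.ker T'.toLinearMap) →L[ℂ] ↥R := cLiftQ (LinearMap.ker T'.toLinearMap) T' le_rfl with hq
  have hkerq : LinearMap.ker q.toLinearMap = ⊥ := ker_cLiftQ_eq_bot T'
  have hrangeq : LinearMap.range q.toLinearMap = ⊤ := by
    rw [range_cLiftQ, LinearMap.range_eq_top]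
    exact hsurj
  set e := ContinuousLinearEquiv.ofBijective q hkerq hrangeq with he
  have hkerT' : ∀ x ∈ LinearMap.ker T'.toLinearMap, g x = 0 := by
    intro x hx
    apply hg
    have : T' x = 0 := hx
    have : (T' x : F) = 0 := by rw [this]; rfl
    exact this
  set gbar : (E ⧸ LinearMap.ker T'.toLinearMap) →L[ℂ] ℂ := cLiftQ (LinearMap.ker T'.toLinearMap) g hkerT' with hgbar
  set φ : ↥R →L[ℂ] ℂ := gbar.comp (e.symm : ↥R →L[ℂ] (E ⧸ LinearMap.ker T'.toLinearMap)) with hφ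
  obtain ⟨h, hh, -⟩ := exists_extension_norm_eq R φ
  refine ⟨h, ?_⟩
  ext x
  have h1 : dualOp T h x = h (T x) := rfl
  have h2 : (T x : F) = (T' x : F) := rfl
  have h3 : e (Submodule.Quotient.mk x) = T' x := by
    have hco : ⇑e = ⇑q := ContinuousLinearEquiv.coeFn_ofBijective q hkerq hrangeq
    rw [hco]
    exact cLiftQ_mk (LinearMap.ker T'.toLinearMap) T' le_rfl x
  have h4 : e.symm (T' x) = Submodule.Quotient.mk x := by
    rw [← h3, ContinuousLinearEquiv.symm_apply_apply]
  rw [h1, h2, hh (T' x)]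
  show gbar (e.symm (T' x)) = g x
  rw [h4]
  exact cLiftQ_mk (LinearMap.ker T'.toLinearMap) g hkerT' x

/-- Closedness of the range of the dual operator, given closed range. -/
theorem isClosed_range_dualOp_of_isClosed [CompleteSpace F] (T : E →L[ℂ] F)
    (hR : IsClosed ((LinearMap.range T.toLinearMap : Submodule ℂ F) : Set F)) :
    IsClosed ((LinearMap.range (dualOp T).toLinearMap : Submodule ℂ (StrongDual ℂ E)) :
      Set (StrongDual ℂ E)) := by
  have hset : ((LinearMap.range (dualOp T).toLinearMap : Submodule ℂ (StrongDual ℂ E)) :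
      Set (StrongDual ℂ E)) =
      ⋂ x : ↥(LinearMap.ker T.toLinearMap), {g : StrongDual ℂ E | g ↑x = 0} := by
    ext g
    simp only [SetLike.mem_coe, LinearMap.mem_range, mem_iInter, mem_setOf_eq]
    constructor
    · rintro ⟨h, rfl⟩ ⟨x, hx⟩
      have hx0 : T x = 0 := hx
      show h (T x) = 0
      rw [hx0, map_zero]
    · intro hg
      exact exists_dual_preimage T hR g (fun x hx => hg ⟨x, hx⟩)
  rw [hset]
  exact isClosed_iInter fun x =>
    isClosed_eq ((ContinuousLinearMap.apply ℂ ℂ (x : E)).continuous) continuous_const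

/-- Hard direction of the closed range theorem: if the range of the dual operator is
closed, then the range of `T` is closed. -/
theorem isClosed_range_of_isClosed_range_dualOp [CompleteSpace F] (T : E →L[ℂ] F)
    (hd : IsClosed ((LinearMap.range (dualOp T).toLinearMap : Submodule ℂ (StrongDual ℂ E)) :
      Set (StrongDual ℂ E))) :
    IsClosed ((LinearMap.range T.toLinearMap : Submodule ℂ F) : Set F) := by
  set R := (LinearMap.range T.toLinearMap).topologicalClosure with hRdef
  have hRc : IsClosed (R : Set F) := Submodule.isClosed_topologicalClosure _
  haveI : CompleteSpace ↥R := hRc.completeSpace_coe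
  set T₁ : E →L[ℂ] ↥R := T.codRestrict R
    (fun x => Submodule.le_topologicalClosure _ ⟨x, rfl⟩) with hT₁
  have hdense : DenseRange ⇑T₁ := by
    intro y
    rw [closure_subtype]
    have himg : (Subtype.val '' Set.range ⇑T₁) = Set.range ⇑T := by
      ext z
      constructor
      · rintro ⟨-, ⟨x, rfl⟩, rfl⟩; exact ⟨x, rfl⟩
      · rintro ⟨x, rfl⟩; exact ⟨T₁ x, ⟨x, rfl⟩, rfl⟩
    rw [himg]
    have hy : (↑y : F) ∈ closure ((LinearMap.range T.toLinearMap : Submodule ℂ F) : Set F) := y.2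
    rwa [LinearMap.coe_range] at hy
  have hinj : Function.Injective ⇑(dualOp T₁) := by
    intro g₁ g₂ hgg
    apply ContinuousLinearMap.coeFn_injective
    refine hdense.equalizer g₁.continuous g₂.continuous (funext fun x => ?_)
    exact ContinuousLinearMap.ext_iff.1 hgg x
  have hre : LinearMap.range (dualOp T₁).toLinearMap = LinearMap.range (dualOp T).toLinearMap := by
    ext g
    simp only [LinearMap.mem_range]
    constructor
    · rintro ⟨φ, rfl⟩
      obtain ⟨ψ, hψ, -⟩ := exists_extension_norm_eq R φ
      refine ⟨ψ, ?_⟩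
      ext x
      show ψ (T x) = φ (T₁ x)
      exact hψ (T₁ x)
    · rintro ⟨ψ, rfl⟩
      exact ⟨ψ.comp R.subtypeL, by ext x; rfl⟩
  have hcl : IsClosed (Set.range ⇑(dualOp T₁)) := by
    have : Set.range ⇑(dualOp T₁) =
        ((LinearMap.range (dualOp T).toLinearMap : Submodule ℂ (StrongDual ℂ E)) :
          Set (StrongDual ℂ E)) := by
      rw [← hre, LinearMap.coe_range, ContinuousLinearMap.coe_coe]
    rw [this]
    exact hd
  set e := (dualOp T₁).equivRange hinj hcl with he
  set c : ℝ := max ‖(e.symm : ↥(LinearMap.range (dualOp T₁).toLinearMap) →L[ℂ] StrongDual ℂ ↥R)‖ 1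
    with hcdef
  have hc1 : (1 : ℝ) ≤ c := le_max_right _ _
  have hc0 : (0 : ℝ) < c := lt_of_lt_of_le one_pos hc1
  have hbound : ∀ g : StrongDual ℂ ↥R, ‖g‖ ≤ c * ‖dualOp T₁ g‖ := by
    intro g
    have h1 : g = e.symm (e g) := (e.symm_apply_apply g).symm
    have h2 : ‖e.symm (e g)‖ ≤
        ‖(e.symm : ↥(LinearMap.range (dualOp T₁).toLinearMap) →L[ℂ] StrongDual ℂ ↥R)‖ * ‖e g‖ :=
      (e.symm : ↥(LinearMap.range (dualOp T₁).toLinearMap) →L[ℂ] StrongDual ℂ ↥R).le_opNorm (e g)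
    have h3 : ‖e g‖ = ‖dualOp T₁ g‖ := by
      have : ((e g : ↥(LinearMap.range (dualOp T₁).toLinearMap)) : StrongDual ℂ E) = dualOp T₁ g := rfl
      rw [← this]
      rfl
    calc ‖g‖ = ‖e.symm (e g)‖ := by rw [← h1]
      _ ≤ _ * ‖e g‖ := h2
      _ ≤ c * ‖dualOp T₁ g‖ := by
          rw [h3]; exact mul_le_mul_of_nonneg_right (le_max_left _ _) (norm_nonneg _)
  have key : ∀ y : ↥R, ∃ x : E, dist (T₁ x) y ≤ 1 / 2 * ‖y‖ ∧ ‖x‖ ≤ 2 * c * ‖y‖ := by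
    intro y
    by_cases hy0 : y = 0
    · refine ⟨0, ?_, ?_⟩
      · simp [hy0]
      · simp [hy0]
    · have hyn : (0 : ℝ) < ‖y‖ := norm_pos_iff.2 hy0
      set M : ℝ := 2 * c * ‖y‖ with hM
      have hM0 : (0 : ℝ) < M := by positivity
      have hclaim : y ∈ closure (⇑T₁ '' closedBall (0 : E) M) := by
        by_contra hy
        set D := closure (⇑T₁ '' closedBall (0 : E) M) with hD
        have hDconv : Convex ℝ D :=
          ((convex_closedBall (0 : E) M).linear_image
            ((T₁ : E →ₗ[ℂ] ↥R).restrictScalars ℝ)).closure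
        obtain ⟨f, u, hfD, hfy⟩ := geometric_hahn_banach_closed_point hDconv isClosed_closure hy
        have h0D : (0 : ↥R) ∈ D :=
          subset_closure ⟨0, mem_closedBall_self hM0.le, map_zero T₁⟩
        have hu0 : (0 : ℝ) < u := by simpa using hfD 0 h0D
        set g : ↥R →L[ℂ] ℂ := f.extendTo𝕜' with hg
        have hgre : ∀ z : ↥R, RCLike.re (g z) = f z := fun z =>
          LinearMap.extendTo𝕜'_apply_re f.toLinearMap z
        have hball : ∀ w : E, ‖w‖ ≤ M → ‖g (T₁ w)‖ < u := by
          intro w hw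
          set a : ℂ := g (T₁ w) with ha
          rcases eq_or_ne a 0 with haz | haz
          · rw [haz]; simpa using hu0
          · have hannz : (‖a‖ : ℝ) ≠ 0 := norm_ne_zero_iff.2 haz
            set lam : ℂ := (starRingEnd ℂ) a / (‖a‖ : ℂ) with hlamdef
            have hlam : ‖lam‖ = 1 := by
              rw [hlamdef, norm_div, RCLike.norm_conj]
              rw [Complex.norm_real, Real.norm_eq_abs, abs_norm]
              exact div_self hannz
            have hmemball : lam • w ∈ closedBall (0 : E) M := by
              rw [mem_closedBall_zero_iff, norm_smul, hlam, one_mul]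
              exact hw
            have hmem : T₁ (lam • w) ∈ D := subset_closure ⟨lam • w, hmemball, rfl⟩
            have hcalc : g (T₁ (lam • w)) = ((‖a‖ : ℝ) : ℂ) := by
              rw [map_smul, map_smul, smul_eq_mul, ← ha, hlamdef]
              rw [div_mul_eq_mul_div, RCLike.conj_mul]
              rw [sq]
              rw [mul_div_assoc]
              have h9 : ((‖a‖:ℝ):ℂ) ≠ 0 := by
                simpa using hannz
              field_simp
              rfl
            have hfin : (‖a‖ : ℝ) = f (T₁ (lam • w)) := by
              rw [← hgre, hcalc]
              simp
            rw [hfin]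
            exact hfD _ hmem
        have hop : ‖dualOp T₁ g‖ ≤ 2 * u / M := by
          refine ContinuousLinearMap.opNorm_le_of_shell (f := dualOp T₁ g) hM0
            (by positivity) (c := (2 : ℂ)) (by norm_num) ?_
          intro x hx1 hx2
          have hx1' : M / 2 ≤ ‖x‖ := by
            rw [show ‖(2 : ℂ)‖ = (2 : ℝ) by norm_num] at hx1
            exact hx1
          have hval : ‖(dualOp T₁ g) x‖ = ‖g (T₁ x)‖ := rfl
          rw [hval]
          have hb : ‖g (T₁ x)‖ ≤ u := le_of_lt (hball x hx2.le)
          have heq : 2 * u / M * (M / 2) = u := by field_simp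
          have hmono : 2 * u / M * (M / 2) ≤ 2 * u / M * ‖x‖ :=
            mul_le_mul_of_nonneg_left hx1' (by positivity)
          linarith
        have h1 : u < f y := hfy
        have h2 : f y = RCLike.re (g y) := (hgre y).symm
        have h3 : RCLike.re (g y) ≤ ‖g y‖ :=
          le_trans (le_abs_self _) (RCLike.abs_re_le_norm (g y))
        have h4 : ‖g y‖ ≤ ‖g‖ * ‖y‖ := g.le_opNorm y
        have h5 : ‖g‖ ≤ c * (2 * u / M) :=
          le_trans (hbound g) (mul_le_mul_of_nonneg_left hop (le_of_lt hc0))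
        have h6 : ‖g‖ * ‖y‖ ≤ c * (2 * u / M) * ‖y‖ :=
          mul_le_mul_of_nonneg_right h5 (norm_nonneg _)
        have heq : c * (2 * u / M) * ‖y‖ = u := by
          have hc' : c ≠ 0 := ne_of_gt hc0
          have hy' : ‖y‖ ≠ 0 := ne_of_gt hyn
          have hy2 : ‖(y : F)‖ ≠ 0 := hy'
          rw [hM]
          field_simp
        linarith
      obtain ⟨b, hb, hdist⟩ := Metric.mem_closure_iff.1 hclaim (‖y‖ / 2) (by positivity)
      obtain ⟨x, hx, rfl⟩ := hb
      refine ⟨x, ?_, ?_⟩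
      · rw [dist_comm] at hdist
        linarith
      · rwa [mem_closedBall_zero_iff] at hx
  have hsurj : Function.Surjective ⇑T₁ :=
    surjective_of_approx T₁ (2 * c) (by positivity) key
  have hRT : LinearMap.range T.toLinearMap = R := by
    apply le_antisymm (Submodule.le_topologicalClosure _)
    intro y hy
    obtain ⟨x, hx⟩ := hsurj ⟨y, hy⟩
    exact ⟨x, congrArg Subtype.val hx⟩
  rw [hRT]
  exact hRc

end Banach

lemma mem_ker_dualOp_iff (T : E →L[ℂ] F) (g : StrongDual ℂ F) :
    g ∈ LinearMap.ker (dualOp T).toLinearMap ↔ ∀ x, g (T x) = 0 := by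
  rw [LinearMap.mem_ker, ContinuousLinearMap.ext_iff]
  simp only [ContinuousLinearMap.coe_coe, dualOp_apply, ContinuousLinearMap.zero_apply]

section Findim

variable {X Y Z : Type*} [NormedAddCommGroup X] [NormedSpace ℂ X]
  [NormedAddCommGroup Y] [NormedSpace ℂ Y] [NormedAddCommGroup Z] [NormedSpace ℂ Z]

noncomputable abbrev instAddCommGroupStrongDualC : AddCommGroup (StrongDual ℂ Y) :=
  ContinuousLinearMap.addCommGroup

attribute [local instance] instAddCommGroupStrongDualC

theorem findim_dual_quot [CompleteSpace Y] [CompleteSpace Z]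
    (A : X →L[ℂ] Y) (B : Y →L[ℂ] Z)
    (hfd : FiniteDimensional ℂ (↥(LinearMap.ker B.toLinearMap) ⧸
       Submodule.comap (LinearMap.ker B.toLinearMap).subtype (LinearMap.range A.toLinearMap)))
    (hBr : IsClosed ((LinearMap.range B.toLinearMap : Submodule ℂ Z) : Set Z)) :
    FiniteDimensional ℂ (↥(LinearMap.ker (dualOp A).toLinearMap) ⧸
       Submodule.comap (LinearMap.ker (dualOp A).toLinearMap).subtype (LinearMap.range (dualOp B).toLinearMap)) := by
  set W := Submodule.comap (LinearMap.ker B.toLinearMap).subtype (LinearMap.range A.toLinearMap) with hW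
  haveI : FiniteDimensional ℂ (↥(LinearMap.ker B.toLinearMap) ⧸ W) := hfd
  have hWle : ∀ f : ↥(LinearMap.ker (dualOp A).toLinearMap),
      W ≤ LinearMap.ker (((f : Y →L[ℂ] ℂ) : Y →ₗ[ℂ] ℂ).comp (LinearMap.ker B.toLinearMap).subtype) := by
    rintro ⟨f, hf⟩ x hx
    obtain ⟨u, hu⟩ := hx
    have hfA : ∀ v, f (A v) = 0 := (mem_ker_dualOp_iff A f).1 hf
    show f ((LinearMap.ker B.toLinearMap).subtype x) = 0
    have : ((LinearMap.ker B.toLinearMap).subtype x : Y) = A u := hu.symm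
    rw [this]
    exact hfA u
  set Ψ : ↥(LinearMap.ker (dualOp A).toLinearMap) →ₗ[ℂ]
      ((↥(LinearMap.ker B.toLinearMap) ⧸ W) →ₗ[ℂ] ℂ) :=
    { toFun := fun f => W.liftQ
        (((f : Y →L[ℂ] ℂ) : Y →ₗ[ℂ] ℂ).comp (LinearMap.ker B.toLinearMap).subtype) (hWle f)
      map_add' := by
        intro f g
        apply Submodule.linearMap_qext
        ext x
        simp
      map_smul' := by
        intro c f
        apply Submodule.linearMap_qext
        ext x
        simp } with hΨdef
  have hker3 : LinearMap.ker Ψ ≤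
      Submodule.comap (LinearMap.ker (dualOp A).toLinearMap).subtype (LinearMap.range (dualOp B).toLinearMap) := by
    rintro ⟨f, hf⟩ hΨ
    have hΨ0 : Ψ ⟨f, hf⟩ = 0 := hΨ
    have hv : ∀ y ∈ LinearMap.ker B.toLinearMap, f y = 0 := by
      intro y hy
      have h0 : (Ψ ⟨f, hf⟩) (Submodule.Quotient.mk (⟨y, hy⟩ : ↥(LinearMap.ker B.toLinearMap))) = 0 := by
        rw [hΨ0]; rfl
      rw [hΨdef] at h0
      simpa using h0
    obtain ⟨h, hh⟩ := exists_dual_preimage B hBr f hv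
    exact ⟨h, hh⟩
  have hker2 : Submodule.comap (LinearMap.ker (dualOp A).toLinearMap).subtype
      (LinearMap.range (dualOp B).toLinearMap) ≤ LinearMap.ker Ψ := by
    rintro ⟨f, hf⟩ hmem
    obtain ⟨g, hg⟩ := hmem
    rw [LinearMap.mem_ker]
    apply Submodule.linearMap_qext
    ext x
    have hx : B (x : Y) = 0 := x.2
    have hfx : f (x : Y) = g (B (x : Y)) := (DFunLike.congr_fun hg ((x : Y))).symm
    simp [hΨdef, hfx, hx]
  set Φ := Submodule.liftQ _ Ψ hker2 with hΦ
  have hinj : LinearMap.ker Φ = ⊥ := Submodule.ker_liftQ_eq_bot _ _ _ hker3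
  exact FiniteDimensional.of_injective Φ (LinearMap.ker_eq_bot.1 hinj)

theorem findim_quot_of_dual
    (A : X →L[ℂ] Y) (B : Y →L[ℂ] Z)
    (hAr : IsClosed ((LinearMap.range A.toLinearMap : Submodule ℂ Y) : Set Y))
    (hfd : FiniteDimensional ℂ (↥(LinearMap.ker (dualOp A).toLinearMap) ⧸
       Submodule.comap (LinearMap.ker (dualOp A).toLinearMap).subtype (LinearMap.range (dualOp B).toLinearMap))) :
    FiniteDimensional ℂ (↥(LinearMap.ker B.toLinearMap) ⧸
       Submodule.comap (LinearMap.ker B.toLinearMap).subtype (LinearMap.range A.toLinearMap)) := by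
  set W' := Submodule.comap (LinearMap.ker (dualOp A).toLinearMap).subtype (LinearMap.range (dualOp B).toLinearMap)
    with hW'
  haveI : FiniteDimensional ℂ (↥(LinearMap.ker (dualOp A).toLinearMap) ⧸ W') := hfd
  set W := Submodule.comap (LinearMap.ker B.toLinearMap).subtype (LinearMap.range A.toLinearMap) with hWdef
  set ev : ↥(LinearMap.ker B.toLinearMap) → (↥(LinearMap.ker (dualOp A).toLinearMap) →ₗ[ℂ] ℂ) := fun x =>
    ((ContinuousLinearMap.apply ℂ ℂ ((x : Y))).toLinearMap).comp
      (LinearMap.ker (dualOp A).toLinearMap).subtype with hevdef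
  have hWle : ∀ x : ↥(LinearMap.ker B.toLinearMap), W' ≤ LinearMap.ker (ev x) := by
    intro x φ hφ
    obtain ⟨g, hg⟩ := hφ
    show (φ : Y →L[ℂ] ℂ) ((x : Y)) = 0
    have h1 : (φ : Y →L[ℂ] ℂ) ((x : Y)) = g (B ((x : Y))) := (DFunLike.congr_fun hg _).symm
    have hx : B ((x : Y)) = 0 := x.2
    rw [h1, hx, map_zero]
  set Ψ : ↥(LinearMap.ker B.toLinearMap) →ₗ[ℂ] ((↥(LinearMap.ker (dualOp A).toLinearMap) ⧸ W') →ₗ[ℂ] ℂ) :=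
    { toFun := fun x => W'.liftQ (ev x) (hWle x)
      map_add' := by
        intro x y
        apply Submodule.linearMap_qext
        ext φ
        simp [hevdef]
      map_smul' := by
        intro c x
        apply Submodule.linearMap_qext
        ext φ
        simp [hevdef] } with hΨdef
  have hker2 : W ≤ LinearMap.ker Ψ := by
    intro x hx
    obtain ⟨u, hu⟩ := hx
    rw [LinearMap.mem_ker]
    apply Submodule.linearMap_qext
    ext φ
    have hφA : ∀ v, (φ : Y →L[ℂ] ℂ) (A v) = 0 := (mem_ker_dualOp_iff A _).1 φ.2
    have hux : A u = ((x : Y)) := hu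
    simp [hΨdef, hevdef, ← hux, hφA]
  have hker3 : LinearMap.ker Ψ ≤ W := by
    intro x hx
    have hx0 : ∀ φ : ↥(LinearMap.ker (dualOp A).toLinearMap), (φ : Y →L[ℂ] ℂ) ((x : Y)) = 0 := by
      intro φ
      have h0 : (Ψ x) (Submodule.Quotient.mk φ) = 0 := by
        rw [show Ψ x = 0 from hx]; rfl
      simpa [hΨdef, hevdef] using h0
    by_contra hmem
    have hxnot : ((x : Y)) ∉ LinearMap.range A.toLinearMap := fun h => hmem (Submodule.mem_comap.2 h)
    obtain ⟨g, hg0, hgx⟩ := exists_dual_separating (LinearMap.range A.toLinearMap) hAr hxnot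
    have hgker : g ∈ LinearMap.ker (dualOp A).toLinearMap :=
      (mem_ker_dualOp_iff A g).2 (fun v => hg0 _ ⟨v, rfl⟩)
    exact hgx (hx0 ⟨g, hgker⟩)
  exact FiniteDimensional.of_injective (Submodule.liftQ _ Ψ hker2)
    (LinearMap.ker_eq_bot.1 (Submodule.ker_liftQ_eq_bot _ _ _ hker3))

end Findim

end Stmt0Aux

/-- For complex Banach spaces `X, Y, Z` and bounded linear operators
`A : X → Y`, `B : Y → Z` with `B ∘ A = 0`, the following are equivalent:
(i) `ker B / range A` is finite-dimensional and `range B` is closed;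
(ii) `ker A* / range B*` is finite-dimensional and `range A*` is closed. -/
theorem stmt0 (X Y Z : Type*) [NormedAddCommGroup X] [NormedSpace ℂ X] [CompleteSpace X]
    [NormedAddCommGroup Y] [NormedSpace ℂ Y] [CompleteSpace Y]
    [NormedAddCommGroup Z] [NormedSpace ℂ Z] [CompleteSpace Z]
    (A : X →L[ℂ] Y) (B : Y →L[ℂ] Z) (hBA : B.comp A = 0) :
    (FiniteDimensional ℂ
        (↥(LinearMap.ker (B : Y →ₗ[ℂ] Z)) ⧸
          Submodule.comap (LinearMap.ker (B : Y →ₗ[ℂ] Z)).subtype (LinearMap.range (A : X →ₗ[ℂ] Y))) ∧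
      IsClosed (LinearMap.range (B : Y →ₗ[ℂ] Z) : Set Z)) ↔
    (FiniteDimensional ℂ
        (@HasQuotient.Quotient ↥(LinearMap.ker (dualOp A : StrongDual ℂ Y →ₗ[ℂ] StrongDual ℂ X)) _ (@Submodule.hasQuotient ℂ _ _ _ _)
          (Submodule.comap (LinearMap.ker (dualOp A : StrongDual ℂ Y →ₗ[ℂ] StrongDual ℂ X)).subtype (LinearMap.range (dualOp B : StrongDual ℂ Z →ₗ[ℂ] StrongDual ℂ Y)))) ∧
      IsClosed (LinearMap.range (dualOp A : StrongDual ℂ Y →ₗ[ℂ] StrongDual ℂ X) : Set (StrongDual ℂ X))) := by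
  constructor
  · rintro ⟨hfd, hBr⟩
    have hrange_le : LinearMap.range A.toLinearMap ≤ LinearMap.ker B.toLinearMap := by
      rintro y ⟨x, rfl⟩
      have hx : B (A x) = (B.comp A) x := rfl
      rw [LinearMap.mem_ker, ContinuousLinearMap.coe_coe, ContinuousLinearMap.coe_coe, hx, hBA]
      rfl
    have hAr : IsClosed ((LinearMap.range A.toLinearMap : Submodule ℂ Y) : Set Y) :=
      Stmt0Aux.isClosed_range_of_quot_findim A (LinearMap.ker B.toLinearMap)
        (ContinuousLinearMap.isClosed_ker B) hrange_le hfd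
    exact ⟨Stmt0Aux.findim_dual_quot A B hfd hBr,
      Stmt0Aux.isClosed_range_dualOp_of_isClosed A hAr⟩
  · rintro ⟨hfd, hAd⟩
    have hdual_le : LinearMap.range (dualOp B).toLinearMap ≤ LinearMap.ker (dualOp A).toLinearMap := by
      rintro g ⟨h, rfl⟩
      rw [Stmt0Aux.mem_ker_dualOp_iff]
      intro x
      show h (B (A x)) = 0
      have hx : B (A x) = 0 := by
        have hx' : B (A x) = (B.comp A) x := rfl
        rw [hx', hBA]
        rfl
      rw [hx, map_zero]
    have hBd : IsClosed ((LinearMap.range (dualOp B).toLinearMap :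
        Submodule ℂ (StrongDual ℂ Y)) : Set (StrongDual ℂ Y)) :=
      Stmt0Aux.isClosed_range_of_quot_findim (dualOp B) (LinearMap.ker (dualOp A).toLinearMap)
        (ContinuousLinearMap.isClosed_ker (dualOp A)) hdual_le hfd
    have hBr := Stmt0Aux.isClosed_range_of_isClosed_range_dualOp B hBd
    have hAr := Stmt0Aux.isClosed_range_of_isClosed_range_dualOp A hAd
    exact ⟨Stmt0Aux.findim_quot_of_dual A B hAr hfd, hBr⟩
end

section
/- Let X, Y, Z be complex Banach spaces and let A : X → Y and B : Y → Z be bounded linear operators with B ∘ A = 0. If the quotient vector space ker(B)/range(A) is finite-dimensional, then range(A) is a closed subspace of Y. -/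
/-- Let `X, Y, Z` be complex Banach spaces and `A : X → Y`, `B : Y → Z`
bounded linear operators with `B ∘ A = 0`. If the quotient `ker B / range A` is
finite-dimensional, then `range A` is closed in `Y`. -/
theorem stmt1 (X Y Z : Type*) [NormedAddCommGroup X] [NormedSpace ℂ X] [CompleteSpace X]
    [NormedAddCommGroup Y] [NormedSpace ℂ Y] [CompleteSpace Y]
    [NormedAddCommGroup Z] [NormedSpace ℂ Z] [CompleteSpace Z]
    (A : X →L[ℂ] Y) (B : Y →L[ℂ] Z) (hBA : B.comp A = 0)
    (hfin : FiniteDimensional ℂ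
      (↥(LinearMap.ker (B : Y →ₗ[ℂ] Z)) ⧸
        Submodule.comap (LinearMap.ker (B : Y →ₗ[ℂ] Z)).subtype (LinearMap.range (A : X →ₗ[ℂ] Y)))) :
    IsClosed (LinearMap.range (A : X →ₗ[ℂ] Y) : Set Y) := by
  classical
  set K : Submodule ℂ Y := LinearMap.ker (B : Y →ₗ[ℂ] Z) with hKdef
  have hKclosed : IsClosed (K : Set Y) := ContinuousLinearMap.isClosed_ker B
  haveI : CompleteSpace K := hKclosed.completeSpace_coe
  have hmem : ∀ x, A x ∈ K := fun x => by
    have : B (A x) = 0 := by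
      have h := ContinuousLinearMap.ext_iff.1 hBA x
      simpa using h
    simpa [hKdef, LinearMap.mem_ker] using this
  set A' : X →L[ℂ] K := A.codRestrict K hmem with hA'def
  set p : Submodule ℂ K := Submodule.comap K.subtype (LinearMap.range (A : X →ₗ[ℂ] Y)) with hpdef
  have hrange' : LinearMap.range (A' : X →ₗ[ℂ] K) = p := by
    ext y
    simp only [hpdef, Submodule.mem_comap, LinearMap.mem_range, Submodule.coe_subtype]
    constructor
    · rintro ⟨x, rfl⟩; exact ⟨x, rfl⟩
    · rintro ⟨x, hx⟩; exact ⟨x, Subtype.ext hx⟩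
  -- closed kernel, quotient Banach space
  set N : Submodule ℂ X := LinearMap.ker (A' : X →ₗ[ℂ] K) with hNdef
  haveI : IsClosed (N : Set X) := ContinuousLinearMap.isClosed_ker A'
  -- lift A' to an injective continuous linear map on the quotient
  set Abar : (X ⧸ N) →ₗ[ℂ] K := N.liftQ (A' : X →ₗ[ℂ] K) (le_refl _) with hAbar
  have hAbar_cont : Continuous Abar := by
    rw [(Submodule.isOpenQuotientMap_mkQ N).isQuotientMap.continuous_iff]
    exact A'.continuous
  set Ab2 : (X ⧸ N) →L[ℂ] K := ⟨Abar, hAbar_cont⟩ with hAb2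
  have hker : LinearMap.ker (Ab2 : (X ⧸ N) →ₗ[ℂ] K) = ⊥ := Submodule.ker_liftQ_eq_bot _ _ _ (le_refl _)
  have hrangeAb : LinearMap.range (Ab2 : (X ⧸ N) →ₗ[ℂ] K) = p := by
    rw [← hrange']
    exact Submodule.range_liftQ _ _ _
  -- pick an algebraic complement `q` of `p` in `K`
  obtain ⟨q, hq⟩ := Submodule.exists_isCompl p
  haveI : FiniteDimensional ℂ q := by
    have e := Submodule.quotientEquivOfIsCompl p q hq
    exact FiniteDimensional.of_injective e.symm.toLinearMap e.symm.injective
  have hqclosed : IsClosed (q : Set K) := Submodule.closed_of_finiteDimensional q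
  have hcompl : IsCompl (LinearMap.range (Ab2 : (X ⧸ N) →ₗ[ℂ] K)) q := by rw [hrangeAb]; exact hq
  have hpclosed : IsClosed ((LinearMap.range (Ab2 : (X ⧸ N) →ₗ[ℂ] K) : Submodule ℂ K) : Set K) :=
    Ab2.closed_complemented_range_of_isCompl_of_ker_eq_bot q hcompl hqclosed hker
  rw [hrangeAb] at hpclosed
  -- transfer back to `Y`
  have himg : (LinearMap.range (A : X →ₗ[ℂ] Y) : Set Y) = Subtype.val '' (p : Set K) := by
    ext y
    constructor
    · rintro ⟨x, rfl⟩
      exact ⟨⟨A x, hmem x⟩, by simpa [hpdef] using ⟨x, rfl⟩, rfl⟩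
    · rintro ⟨⟨y', hy'⟩, hyp, rfl⟩
      simpa [hpdef] using hyp
  rw [himg]
  exact (hKclosed.isClosedEmbedding_subtypeVal.isClosedMap) _ hpclosed
end

section
/- Let X, Y, Z be complex Banach spaces and let A : X → Y and B : Y → Z be bounded linear operators with B ∘ A = 0 and with range(A) closed in Y. Then ker(B) ∩ J⁻¹(range(A**)) = range(A), where J : Y → Y'' is the canonical embedding, and consequently the natural linear map ker(B)/range(A) → ker(B**)/range(A**) induced by J is injective. In particular, if ker(B**)/range(A**) is finite-dimensional, then ker(B)/range(A) is finite-dimensional. -/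
noncomputable instance strongDualAddCommGroupNormed {E : Type*} [NormedAddCommGroup E] [NormedSpace ℂ E] :
    AddCommGroup (StrongDual ℂ E) :=
  NormedAddCommGroup.toAddCommGroup

lemma dualOp_apply {X Y : Type*} [NormedAddCommGroup X] [NormedSpace ℂ X]
    [NormedAddCommGroup Y] [NormedSpace ℂ Y] (T : X →L[ℂ] Y)
    (g : StrongDual ℂ Y) : dualOp T g = g.comp T := rfl

/-- `T** ∘ J = J ∘ T`. -/
lemma bidual_comm {X Y : Type*} [NormedAddCommGroup X] [NormedSpace ℂ X]
    [NormedAddCommGroup Y] [NormedSpace ℂ Y] (T : X →L[ℂ] Y) (x : X) :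
    dualOp (dualOp T) (NormedSpace.inclusionInDoubleDual ℂ X x) =
      NormedSpace.inclusionInDoubleDual ℂ Y (T x) := by
  ext g
  rfl

/-- The separation step: if `S` is a closed subspace and `y ∉ S`, there is a functional
vanishing on `S` but not at `y`. -/
lemma exists_functional {Y : Type*} [NormedAddCommGroup Y] [NormedSpace ℂ Y]
    (S : Submodule ℂ Y) (hS : IsClosed (S : Set Y)) {y : Y} (hy : y ∉ S) :
    ∃ g : Y →L[ℂ] ℂ, (∀ s ∈ S, g s = 0) ∧ g y ≠ 0 := by
  haveI : IsClosed (S : Set Y) := hS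
  have hmk : (Submodule.Quotient.mk y : Y ⧸ S) ≠ 0 := by
    simpa [Submodule.Quotient.mk_eq_zero] using hy
  obtain ⟨g', -, hg'⟩ := exists_dual_vector ℂ _ (norm_ne_zero_iff.mpr hmk)
  have hcont : Continuous S.mkQ := continuous_quot_mk
  refine ⟨g'.comp ⟨S.mkQ, hcont⟩, fun s hs => ?_, ?_⟩
  · have : S.mkQ s = 0 := by simpa [Submodule.Quotient.mk_eq_zero] using hs
    simp [ContinuousLinearMap.comp_apply, this]
  · have : ‖(Submodule.Quotient.mk y : Y ⧸ S)‖ ≠ 0 := norm_ne_zero_iff.mpr hmk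
    simp only [ContinuousLinearMap.comp_apply]
    intro h
    rw [show (⟨S.mkQ, hcont⟩ : Y →L[ℂ] Y ⧸ S) y = Submodule.Quotient.mk y from rfl, hg'] at h
    exact this (Complex.ofReal_eq_zero.mp h)

set_option maxHeartbeats 1000000 in
/-- Let `X, Y, Z` be complex Banach spaces, `A : X → Y`, `B : Y → Z`
bounded linear operators with `B ∘ A = 0` and `range A` closed. Then
`ker B ∩ J⁻¹(range A**) = range A` (where `J` is the canonical embedding into the bidual);
consequently any linear map `ker B / range A → ker B** / range A**` induced by `J` is
injective, and in particular if `ker B** / range A**` is finite-dimensional then so is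
`ker B / range A`. -/
theorem stmt3 (X Y Z : Type*) [NormedAddCommGroup X] [NormedSpace ℂ X] [CompleteSpace X]
    [NormedAddCommGroup Y] [NormedSpace ℂ Y] [CompleteSpace Y]
    [NormedAddCommGroup Z] [NormedSpace ℂ Z] [CompleteSpace Z]
    (A : X →L[ℂ] Y) (B : Y →L[ℂ] Z) (hBA : B.comp A = 0)
    (hA : IsClosed (LinearMap.range (A : X →ₗ[ℂ] Y) : Set Y)) :
    LinearMap.ker (B : Y →ₗ[ℂ] Z) ⊓
        Submodule.comap (NormedSpace.inclusionInDoubleDual ℂ Y).toLinearMap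
          (LinearMap.range (dualOp (dualOp A) : StrongDual ℂ (StrongDual ℂ X) →ₗ[ℂ] StrongDual ℂ (StrongDual ℂ Y))) = LinearMap.range (A : X →ₗ[ℂ] Y) ∧
    (∀ φ : (↥(LinearMap.ker (B : Y →ₗ[ℂ] Z)) ⧸
              Submodule.comap (LinearMap.ker (B : Y →ₗ[ℂ] Z)).subtype (LinearMap.range (A : X →ₗ[ℂ] Y))) →ₗ[ℂ]
            (↥(LinearMap.ker (dualOp (dualOp B) : StrongDual ℂ (StrongDual ℂ Y) →ₗ[ℂ] StrongDual ℂ (StrongDual ℂ Z))) ⧸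
              Submodule.comap (LinearMap.ker (dualOp (dualOp B) : StrongDual ℂ (StrongDual ℂ Y) →ₗ[ℂ] StrongDual ℂ (StrongDual ℂ Z))).subtype
                (LinearMap.range (dualOp (dualOp A) : StrongDual ℂ (StrongDual ℂ X) →ₗ[ℂ] StrongDual ℂ (StrongDual ℂ Y)))),
      (∀ (x : ↥(LinearMap.ker (B : Y →ₗ[ℂ] Z)))
          (hx : NormedSpace.inclusionInDoubleDual ℂ Y (x : Y) ∈
            LinearMap.ker (dualOp (dualOp B) : StrongDual ℂ (StrongDual ℂ Y) →ₗ[ℂ] StrongDual ℂ (StrongDual ℂ Z))),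
        φ (Submodule.Quotient.mk x) =
          Submodule.Quotient.mk ⟨NormedSpace.inclusionInDoubleDual ℂ Y (x : Y), hx⟩) →
      Function.Injective φ) ∧
    (FiniteDimensional ℂ
        (↥(LinearMap.ker (dualOp (dualOp B) : StrongDual ℂ (StrongDual ℂ Y) →ₗ[ℂ] StrongDual ℂ (StrongDual ℂ Z))) ⧸
          Submodule.comap (LinearMap.ker (dualOp (dualOp B) : StrongDual ℂ (StrongDual ℂ Y) →ₗ[ℂ] StrongDual ℂ (StrongDual ℂ Z))).subtype
            (LinearMap.range (dualOp (dualOp A) : StrongDual ℂ (StrongDual ℂ X) →ₗ[ℂ] StrongDual ℂ (StrongDual ℂ Y)))) →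
      FiniteDimensional ℂ
        (↥(LinearMap.ker (B : Y →ₗ[ℂ] Z)) ⧸
          Submodule.comap (LinearMap.ker (B : Y →ₗ[ℂ] Z)).subtype (LinearMap.range (A : X →ₗ[ℂ] Y)))) := by
  set J := NormedSpace.inclusionInDoubleDual ℂ Y with hJ
  -- membership in ker B** for J-image of ker B elements
  have hkerJ : ∀ x : ↥(LinearMap.ker (B : Y →ₗ[ℂ] Z)), J (x : Y) ∈ LinearMap.ker (dualOp (dualOp B) : StrongDual ℂ (StrongDual ℂ Y) →ₗ[ℂ] StrongDual ℂ (StrongDual ℂ Z)) := by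
    intro x
    have hx : B (x : Y) = 0 := x.2
    have := bidual_comm B (x : Y)
    rw [hx] at this
    rw [LinearMap.mem_ker]
    exact this.trans (map_zero _)
  -- the key set equality
  have key : LinearMap.ker (B : Y →ₗ[ℂ] Z) ⊓
      Submodule.comap (J : Y →L[ℂ] _).toLinearMap (LinearMap.range (dualOp (dualOp A) : StrongDual ℂ (StrongDual ℂ X) →ₗ[ℂ] StrongDual ℂ (StrongDual ℂ Y))) =
      LinearMap.range (A : X →ₗ[ℂ] Y) := by
    apply le_antisymm
    · rintro y ⟨hyB, hyJ⟩
      obtain ⟨Φ, hΦ⟩ := hyJ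
      by_contra hy
      obtain ⟨g, hg0, hgy⟩ := exists_functional (LinearMap.range (A : X →ₗ[ℂ] Y)) hA hy
      have hAg : dualOp A g = 0 := by
        ext x
        exact hg0 (A x) ⟨x, rfl⟩
      have h1 : Φ (dualOp A g) = g y := congrArg (fun Ψ => Ψ g) hΦ
      rw [hAg, map_zero] at h1
      exact hgy h1.symm
    · rintro y ⟨x, rfl⟩
      refine ⟨?_, ?_⟩
      · show B (A x) = 0
        have := ContinuousLinearMap.ext_iff.1 hBA x
        simpa using this
      · exact ⟨NormedSpace.inclusionInDoubleDual ℂ X x, (bidual_comm A x)⟩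
  refine ⟨key, ?_, ?_⟩
  · -- injectivity
    intro φ hφ
    rw [← LinearMap.ker_eq_bot]
    rw [Submodule.eq_bot_iff]
    intro q hq
    obtain ⟨x, rfl⟩ := Submodule.Quotient.mk_surjective _ q
    rw [LinearMap.mem_ker, hφ x (hkerJ x), Submodule.Quotient.mk_eq_zero,
      Submodule.mem_comap] at hq
    rw [Submodule.Quotient.mk_eq_zero, Submodule.mem_comap]
    have : (x : Y) ∈ LinearMap.ker (B : Y →ₗ[ℂ] Z) ⊓
        Submodule.comap (J : Y →L[ℂ] _).toLinearMap
          (LinearMap.range (dualOp (dualOp A) : StrongDual ℂ (StrongDual ℂ X) →ₗ[ℂ] StrongDual ℂ (StrongDual ℂ Y))) := ⟨x.2, hq⟩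
    rw [key] at this
    exact this
  · -- finite dimensionality
    intro hfd
    -- construct the canonical map φ
    let K := LinearMap.ker (B : Y →ₗ[ℂ] Z)
    let K' := LinearMap.ker (dualOp (dualOp B) : StrongDual ℂ (StrongDual ℂ Y) →ₗ[ℂ] StrongDual ℂ (StrongDual ℂ Z))
    let f : ↥K →ₗ[ℂ] ↥K' ⧸ Submodule.comap K'.subtype (LinearMap.range (dualOp (dualOp A) : StrongDual ℂ (StrongDual ℂ X) →ₗ[ℂ] StrongDual ℂ (StrongDual ℂ Y))) :=
      (Submodule.mkQ _).comp
        (LinearMap.codRestrict K'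
          ((J : Y →L[ℂ] _).toLinearMap.comp K.subtype) (fun x => hkerJ x))
    have hker : Submodule.comap K.subtype (LinearMap.range (A : X →ₗ[ℂ] Y)) ≤ LinearMap.ker f := by
      rintro x hx
      obtain ⟨u, hu⟩ := hx
      show Submodule.Quotient.mk _ = 0
      rw [Submodule.Quotient.mk_eq_zero, Submodule.mem_comap]
      refine ⟨NormedSpace.inclusionInDoubleDual ℂ X u, ?_⟩
      show dualOp (dualOp A) _ = J (x : Y)
      rw [bidual_comm A u]
      exact congrArg J hu
    let φ := Submodule.liftQ _ f hker
    have hφ : ∀ (x : ↥K) (hx : J (x : Y) ∈ K'),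
        φ (Submodule.Quotient.mk x) = Submodule.Quotient.mk ⟨J (x : Y), hx⟩ := by
      intro x hx
      rfl
    have hinj : Function.Injective φ := by
      rw [← LinearMap.ker_eq_bot, Submodule.eq_bot_iff]
      intro q hq
      obtain ⟨x, rfl⟩ := Submodule.Quotient.mk_surjective _ q
      rw [LinearMap.mem_ker, hφ x (hkerJ x), Submodule.Quotient.mk_eq_zero,
        Submodule.mem_comap] at hq
      rw [Submodule.Quotient.mk_eq_zero, Submodule.mem_comap]
      have : (x : Y) ∈ LinearMap.ker (B : Y →ₗ[ℂ] Z) ⊓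
          Submodule.comap (J : Y →L[ℂ] _).toLinearMap
            (LinearMap.range (dualOp (dualOp A) : StrongDual ℂ (StrongDual ℂ X) →ₗ[ℂ] StrongDual ℂ (StrongDual ℂ Y))) := ⟨x.2, hq⟩
      rw [key] at this
      exact this
    exact FiniteDimensional.of_injective φ hinj
end

section
/- Let X₀, X₁, X₂ be complex Banach spaces, let d₂ : X₂ → X₁ and d₁ : X₁ → X₀ be bounded linear operators with d₁ ∘ d₂ = 0, and let h₁ : X₁ → X₂, h₀ : X₀ → X₁ and k₁ : X₁ → X₁ be bounded linear operators satisfying d₂ ∘ h₁ + h₀ ∘ d₁ = Id_{X₁} − k₁, h₁ ∘ h₀ = 0, h₁ ∘ k₁ = 0, k₁ ∘ d₂ = 0, k₁ ∘ k₁ = k₁, and k₁ ∘ h₀ = 0. Then: (i) h₁ ∘ d₂ : X₂ → X₂ is a bounded projection, so X₂ = ker(h₁ ∘ d₂) ⊕ range(h₁ ∘ d₂); (ii) ker(h₁ ∘ d₂) = ker(d₂) and range(h₁ ∘ d₂) = range(h₁), so X₂ = ker(d₂) ⊕ range(h₁); and (iii) ker(h₁) = range(h₀) ⊕ range(k₁)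 as an internal direct sum of subspaces of X₁. -/
/-- Let `X₀, X₁, X₂` be complex Banach spaces and let
`d₂ : X₂ → X₁`, `d₁ : X₁ → X₀`, `h₁ : X₁ → X₂`, `h₀ : X₀ → X₁`, `k₁ : X₁ → X₁` be bounded
linear operators with `d₁ ∘ d₂ = 0`, `d₂ ∘ h₁ + h₀ ∘ d₁ = Id − k₁`, `h₁ ∘ h₀ = 0`,
`h₁ ∘ k₁ = 0`, `k₁ ∘ d₂ = 0`, `k₁ ∘ k₁ = k₁` and `k₁ ∘ h₀ = 0`. Then:
(i) `h₁ ∘ d₂` is a bounded projection, so `X₂ = ker(h₁∘d₂) ⊕ range(h₁∘d₂)`;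
(ii) `ker(h₁∘d₂) = ker d₂` and `range(h₁∘d₂) = range h₁`, so `X₂ = ker d₂ ⊕ range h₁`;
(iii) `ker h₁ = range h₀ ⊕ range k₁` as an internal direct sum. -/
theorem stmt8 (X₀ X₁ X₂ : Type*)
    [NormedAddCommGroup X₀] [NormedSpace ℂ X₀] [CompleteSpace X₀]
    [NormedAddCommGroup X₁] [NormedSpace ℂ X₁] [CompleteSpace X₁]
    [NormedAddCommGroup X₂] [NormedSpace ℂ X₂] [CompleteSpace X₂]
    (d₂ : X₂ →L[ℂ] X₁) (d₁ : X₁ →L[ℂ] X₀)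
    (h₁ : X₁ →L[ℂ] X₂) (h₀ : X₀ →L[ℂ] X₁) (k₁ : X₁ →L[ℂ] X₁)
    (hdd : d₁.comp d₂ = 0)
    (hhom : d₂.comp h₁ + h₀.comp d₁ = ContinuousLinearMap.id ℂ X₁ - k₁)
    (hh : h₁.comp h₀ = 0) (hhk : h₁.comp k₁ = 0) (hkd : k₁.comp d₂ = 0)
    (hkk : k₁.comp k₁ = k₁) (hkh : k₁.comp h₀ = 0) :
    ((h₁.comp d₂).comp (h₁.comp d₂) = h₁.comp d₂ ∧
      IsCompl (LinearMap.ker ((h₁.comp d₂ : X₂ →L[ℂ] X₂) : X₂ →ₗ[ℂ] X₂)) (LinearMap.range ((h₁.comp d₂ : X₂ →L[ℂ] X₂) : X₂ →ₗ[ℂ] X₂))) ∧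
    (LinearMap.ker ((h₁.comp d₂ : X₂ →L[ℂ] X₂) : X₂ →ₗ[ℂ] X₂) = LinearMap.ker (d₂ : X₂ →ₗ[ℂ] X₁) ∧
      LinearMap.range ((h₁.comp d₂ : X₂ →L[ℂ] X₂) : X₂ →ₗ[ℂ] X₂) = LinearMap.range (h₁ : X₁ →ₗ[ℂ] X₂) ∧
      IsCompl (LinearMap.ker (d₂ : X₂ →ₗ[ℂ] X₁)) (LinearMap.range (h₁ : X₁ →ₗ[ℂ] X₂))) ∧
    (LinearMap.ker (h₁ : X₁ →ₗ[ℂ] X₂) = LinearMap.range (h₀ : X₀ →ₗ[ℂ] X₁) ⊔ LinearMap.range (k₁ : X₁ →ₗ[ℂ] X₁) ∧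
      Disjoint (LinearMap.range (h₀ : X₀ →ₗ[ℂ] X₁)) (LinearMap.range (k₁ : X₁ →ₗ[ℂ] X₁))) := by
  -- pointwise versions of the hypotheses
  have e : ∀ x : X₁, d₂ (h₁ x) + h₀ (d₁ x) = x - k₁ x := by
    intro x
    have := ContinuousLinearMap.ext_iff.mp hhom x
    simpa using this
  have edd : ∀ x : X₂, d₁ (d₂ x) = 0 := fun x => by
    simpa using ContinuousLinearMap.ext_iff.mp hdd x
  have ehh : ∀ x : X₀, h₁ (h₀ x) = 0 := fun x => by
    simpa using ContinuousLinearMap.ext_iff.mp hh x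
  have ehk : ∀ x : X₁, h₁ (k₁ x) = 0 := fun x => by
    simpa using ContinuousLinearMap.ext_iff.mp hhk x
  have ekd : ∀ x : X₂, k₁ (d₂ x) = 0 := fun x => by
    simpa using ContinuousLinearMap.ext_iff.mp hkd x
  have ekk : ∀ x : X₁, k₁ (k₁ x) = k₁ x := fun x => by
    simpa using ContinuousLinearMap.ext_iff.mp hkk x
  have ekh : ∀ x : X₀, k₁ (h₀ x) = 0 := fun x => by
    simpa using ContinuousLinearMap.ext_iff.mp hkh x
  -- key pointwise fact: d₂ (h₁ (d₂ x)) = d₂ x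
  have key : ∀ x : X₂, d₂ (h₁ (d₂ x)) = d₂ x := by
    intro x
    have := e (d₂ x)
    simpa [edd x, ekd x] using this
  -- the idempotency of P = h₁ ∘ d₂
  have hP : (h₁.comp d₂).comp (h₁.comp d₂) = h₁.comp d₂ := by
    ext x
    simp [ContinuousLinearMap.comp_apply, key x]
  -- auxiliary: fixed points of P on its range
  have hfix : ∀ x : X₂, h₁ (d₂ (h₁ (d₂ x))) = h₁ (d₂ x) := fun x => by rw [key x]
  -- ker P = ker d₂
  have hker : LinearMap.ker ((h₁.comp d₂ : X₂ →L[ℂ] X₂) : X₂ →ₗ[ℂ] X₂) = LinearMap.ker (d₂ : X₂ →ₗ[ℂ] X₁) := by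
    apply le_antisymm
    · intro x hx
      simp only [LinearMap.mem_ker, ContinuousLinearMap.coe_coe, ContinuousLinearMap.coe_comp', Function.comp_apply] at hx ⊢
      have := key x
      rw [hx, map_zero] at this
      exact this.symm
    · intro x hx
      simp only [LinearMap.mem_ker, ContinuousLinearMap.coe_coe, ContinuousLinearMap.coe_comp', Function.comp_apply] at hx ⊢
      rw [hx, map_zero]
  -- range P = range h₁
  have hrange : LinearMap.range ((h₁.comp d₂ : X₂ →L[ℂ] X₂) : X₂ →ₗ[ℂ] X₂) = LinearMap.range (h₁ : X₁ →ₗ[ℂ] X₂) := by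
    apply le_antisymm
    · rintro _ ⟨x, rfl⟩
      exact ⟨d₂ x, rfl⟩
    · rintro _ ⟨y, rfl⟩
      refine ⟨h₁ y, ?_⟩
      have h3 : d₂ (h₁ y) = y - k₁ y - h₀ (d₁ y) := by
        rw [← e y]; abel
      simp only [ContinuousLinearMap.coe_coe, ContinuousLinearMap.coe_comp', Function.comp_apply, h3]
      simp [map_sub, ehk y, ehh (d₁ y)]
  -- IsCompl for the projection P
  have hcompl : IsCompl (LinearMap.ker ((h₁.comp d₂ : X₂ →L[ℂ] X₂) : X₂ →ₗ[ℂ] X₂)) (LinearMap.range ((h₁.comp d₂ : X₂ →L[ℂ] X₂) : X₂ →ₗ[ℂ] X₂)) := by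
    constructor
    · rw [Submodule.disjoint_def]
      rintro x hx ⟨y, rfl⟩
      simp only [LinearMap.mem_ker, ContinuousLinearMap.coe_coe, ContinuousLinearMap.coe_comp', Function.comp_apply] at hx ⊢
      have := hfix y
      rw [hx] at this
      simpa using this.symm
    · rw [codisjoint_iff, eq_top_iff]
      intro x _
      refine Submodule.mem_sup.mpr ⟨x - h₁ (d₂ x), ?_, h₁ (d₂ x), ⟨x, rfl⟩, by abel⟩
      simp only [LinearMap.mem_ker, ContinuousLinearMap.coe_comp', Function.comp_apply]
      simp [map_sub, key x]
  refine ⟨⟨hP, hcompl⟩, ⟨hker, hrange, by rw [← hker, ← hrange]; exact hcompl⟩, ?_, ?_⟩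
  · -- ker h₁ = range h₀ ⊔ range k₁
    apply le_antisymm
    · intro x hx
      simp only [LinearMap.mem_ker, ContinuousLinearMap.coe_coe] at hx
      have := e x
      rw [hx] at this
      simp only [map_zero, zero_add] at this
      -- x = h₀ (d₁ x) + k₁ x
      have hx' : x = h₀ (d₁ x) + k₁ x := by rw [this]; abel
      exact Submodule.mem_sup.mpr ⟨h₀ (d₁ x), ⟨d₁ x, rfl⟩, k₁ x, ⟨x, rfl⟩, hx'.symm⟩
    · rw [sup_le_iff]
      constructor
      · rintro _ ⟨y, rfl⟩
        simpa [LinearMap.mem_ker] using ehh y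
      · rintro _ ⟨y, rfl⟩
        simpa [LinearMap.mem_ker] using ehk y
  · -- disjointness of range h₀ and range k₁
    rw [Submodule.disjoint_def]
    rintro x ⟨a, rfl⟩ ⟨b, hb⟩
    have : k₁ (h₀ a) = h₀ a := by simp only [ContinuousLinearMap.coe_coe] at hb; rw [← hb, ekk b, hb]
    rw [ekh a] at this
    exact this.symm
end

section
/- Let 0 → Xₙ →(dₙ) Xₙ₋₁ → ⋯ → X₁ →(d₁) X₀ → 0 be a complex of complex Banach spaces and bounded linear operators (d_p ∘ d_{p+1} = 0 for all p, with the conventions d₀ = 0 and d_{n+1} = 0), and let 0 ≤ k ≤ n. Suppose the complex is exact in degrees 0, …, k, i.e., range(d_{p+1}) = ker(d_p) for p = 0, …, k (so in particular d₁ is surjective when k ≥ 0), and suppose ker(d_p) admits a closed topological complement in X_p for p = 1, …, k+1. Then there exist bounded linear operators h_p : X_p → X_{p+1} for p = 0, …, k such that, with the convention h₋₁ = 0, d_{p+1} ∘ h_p + h_{p−1} ∘ d_p = Id_{X_p} for every p = 0, …, k, and h_p ∘ h_{p−1} = 0 for every p = 1, …, k. -/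
/-- A bounded operator whose kernel is closed-complemented admits a continuous
section on any closed submodule equal to its range. -/
lemma aux_section {E F : Type*} [NormedAddCommGroup E] [NormedSpace ℂ E] [CompleteSpace E]
    [NormedAddCommGroup F] [NormedSpace ℂ F] [CompleteSpace F]
    (T : E →L[ℂ] F) (hc : (LinearMap.ker (T : E →ₗ[ℂ] F)).ClosedComplemented)
    (S : Submodule ℂ F) (hS : LinearMap.range (T : E →ₗ[ℂ] F) = S) (hSc : IsClosed (S : Set F)) :
    ∃ σ : S →L[ℂ] E, ∀ x : S, T (σ x) = x := by
  obtain ⟨f, hf⟩ := hc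
  set π : E →L[ℂ] E := (LinearMap.ker (T : E →ₗ[ℂ] F)).subtypeL.comp f with hπdef
  have hπK : ∀ x ∈ LinearMap.ker (T : E →ₗ[ℂ] F), π x = x := fun x hx => by
    exact congrArg Subtype.val (hf ⟨x, hx⟩)
  have hπmem : ∀ x, π x ∈ LinearMap.ker (T : E →ₗ[ℂ] F) := fun x => (f x).2
  haveI : CompleteSpace S := hSc.completeSpace_coe
  haveI : CompleteSpace (LinearMap.ker (π : E →ₗ[ℂ] E)) :=
    (ContinuousLinearMap.isClosed_ker π).completeSpace_coe
  set D : LinearMap.ker (π : E →ₗ[ℂ] E) →L[ℂ] S :=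
    (T.comp (LinearMap.ker (π : E →ₗ[ℂ] E)).subtypeL).codRestrict S
      (fun x => hS ▸ LinearMap.mem_range_self _ _) with hDdef
  have hDcoe : ∀ x : LinearMap.ker (π : E →ₗ[ℂ] E), (D x : F) = T (x : E) := fun x => rfl
  have hker : LinearMap.ker (D : LinearMap.ker (π : E →ₗ[ℂ] E) →ₗ[ℂ] S) = ⊥ := by
    rw [LinearMap.ker_eq_bot']
    rintro ⟨x, hx⟩ h
    have hTx : T x = 0 := congrArg Subtype.val h
    have hx' : π x = 0 := hx
    have := hπK x hTx
    exact Subtype.ext (this.symm.trans hx')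
  have hrange : LinearMap.range (D : LinearMap.ker (π : E →ₗ[ℂ] E) →ₗ[ℂ] S) = ⊤ := by
    rw [LinearMap.range_eq_top]
    rintro ⟨s, hs⟩
    rw [← hS] at hs
    obtain ⟨y, hy⟩ := hs
    have hπy : π y ∈ LinearMap.ker (T : E →ₗ[ℂ] F) := hπmem y
    have hmem : y - π y ∈ LinearMap.ker (π : E →ₗ[ℂ] E) := by
      simp only [LinearMap.mem_ker, map_sub, ContinuousLinearMap.coe_coe]
      rw [hπK _ hπy, sub_self]
    refine ⟨⟨y - π y, hmem⟩, Subtype.ext ?_⟩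
    have : T (π y) = 0 := hπy
    simp [hDcoe, map_sub, this, ← hy]
  set e := ContinuousLinearEquiv.ofBijective D hker hrange with hedef
  refine ⟨(LinearMap.ker (π : E →ₗ[ℂ] E)).subtypeL.comp e.symm.toContinuousLinearMap, fun x => ?_⟩
  have h1 : D (e.symm x) = x := ContinuousLinearEquiv.ofBijective_apply_symm_apply D hker hrange x
  calc T ((LinearMap.ker (π : E →ₗ[ℂ] E)).subtypeL (e.symm x)) = (D (e.symm x) : F) := rfl
    _ = x := by rw [h1]

/-- Let `0 → Xₙ → ⋯ → X₀ → 0` be a complex of complex Banach spaces and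
bounded linear operators (here `d p : X (p+1) → X p` plays the role of `d_{p+1}`, with
`d p = 0` for `p ≥ n` encoding the conventions `d₀ = 0`, `d_{n+1} = 0`), and let
`0 ≤ k ≤ n`. If the complex is exact in degrees `0, …, k` and `ker d_p` admits a closed
topological complement for `p = 1, …, k+1`, then there are bounded operators
`h_p : X_p → X_{p+1}` (`p = 0, …, k`) with `d_{p+1} ∘ h_p + h_{p-1} ∘ d_p = Id` for
`p = 0, …, k` (with `h₋₁ = 0`) and `h_p ∘ h_{p-1} = 0` for `p = 1, …, k`. -/
theorem stmt10 (n k : ℕ) (hkn : k ≤ n)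
    (X : ℕ → Type*) [∀ p, NormedAddCommGroup (X p)] [∀ p, NormedSpace ℂ (X p)]
    [∀ p, CompleteSpace (X p)]
    (d : ∀ p : ℕ, X (p + 1) →L[ℂ] X p)
    (hcomplex : ∀ p, (d p).comp (d (p + 1)) = 0)
    (hzero : ∀ p, n ≤ p → d p = 0)
    (hexact0 : LinearMap.range (d 0 : X (0 + 1) →ₗ[ℂ] X 0) = ⊤)
    (hexact : ∀ p, p < k → LinearMap.range (d (p + 1) : X (p + 1 + 1) →ₗ[ℂ] X (p + 1)) = LinearMap.ker (d p : X (p + 1) →ₗ[ℂ] X p))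
    (hcompl : ∀ p, p ≤ k → Submodule.ClosedComplemented (LinearMap.ker (d p : X (p + 1) →ₗ[ℂ] X p))) :
    ∃ h : ∀ p : ℕ, X p →L[ℂ] X (p + 1),
      (d 0).comp (h 0) = ContinuousLinearMap.id ℂ (X 0) ∧
      (∀ p, p < k →
        (d (p + 1)).comp (h (p + 1)) + (h p).comp (d p) =
          ContinuousLinearMap.id ℂ (X (p + 1))) ∧
      (∀ p, p < k → (h (p + 1)).comp (h p) = 0) := by
  suffices H : ∀ m, m ≤ k → ∃ h : ∀ p : ℕ, X p →L[ℂ] X (p + 1),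
      (d 0).comp (h 0) = ContinuousLinearMap.id ℂ (X 0) ∧
      (∀ p, p < m →
        (d (p + 1)).comp (h (p + 1)) + (h p).comp (d p) =
          ContinuousLinearMap.id ℂ (X (p + 1))) ∧
      (∀ p, p < m → (h (p + 1)).comp (h p) = 0) by
    exact H k le_rfl
  intro m
  induction m with
  | zero =>
    intro _
    obtain ⟨σ, hσ⟩ := aux_section (d 0) (hcompl 0 (Nat.zero_le k)) ⊤ hexact0
      (by rw [Submodule.top_coe]; exact isClosed_univ)
    refine ⟨fun p => Nat.casesOn p
        (σ.comp ((ContinuousLinearMap.id ℂ (X 0)).codRestrict ⊤ fun x => trivial))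
        (fun _ => 0), ?_, fun p hp => absurd hp (Nat.not_lt_zero p),
        fun p hp => absurd hp (Nat.not_lt_zero p)⟩
    ext x
    exact hσ ⟨x, trivial⟩
  | succ m ih =>
    intro hm1
    obtain ⟨h, hh0, hhd, hhh⟩ := ih (le_trans (Nat.le_succ m) hm1)
    -- key identity: d m ∘ h m ∘ d m = d m
    have key : ∀ y : X (m + 1), d m (h m (d m y)) = d m y := by
      intro y
      cases m with
      | zero => exact congrFun (congrArg DFunLike.coe hh0) (d 0 y)
      | succ q =>
        have := congrFun (congrArg DFunLike.coe (hhd q (Nat.lt_succ_self q))) (d (q + 1) y)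
        simp only [ContinuousLinearMap.add_apply, ContinuousLinearMap.comp_apply,
          ContinuousLinearMap.id_apply] at this
        have hz : d q (d (q + 1) y) = 0 :=
          congrFun (congrArg DFunLike.coe (hcomplex q)) y
        rw [hz, map_zero, add_zero] at this
        exact this
    obtain ⟨σ, hσ⟩ := aux_section (d (m + 1)) (hcompl (m + 1) hm1)
      (LinearMap.ker (d m : X (m + 1) →ₗ[ℂ] X m)) (hexact m (Nat.lt_of_succ_le hm1))
      (ContinuousLinearMap.isClosed_ker (d m))
    have gmem : ∀ x : X (m + 1),
        (ContinuousLinearMap.id ℂ (X (m + 1)) - (h m).comp (d m)) x ∈ LinearMap.ker (d m : X (m + 1) →ₗ[ℂ] X m) := by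
      intro x
      simp only [LinearMap.mem_ker, ContinuousLinearMap.sub_apply,
        ContinuousLinearMap.comp_apply, ContinuousLinearMap.id_apply, map_sub, ContinuousLinearMap.coe_coe]
      rw [key x, sub_self]
    set g : X (m + 1) →L[ℂ] LinearMap.ker (d m : X (m + 1) →ₗ[ℂ] X m) :=
      (ContinuousLinearMap.id ℂ (X (m + 1)) - (h m).comp (d m)).codRestrict
        (LinearMap.ker (d m : X (m + 1) →ₗ[ℂ] X m)) gmem with hgdef
    have hgcoe : ∀ x, (g x : X (m + 1)) = x - h m (d m x) := fun x => rfl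
    set h' : ∀ p : ℕ, X p →L[ℂ] X (p + 1) := Function.update h (m + 1) (σ.comp g) with hh'def
    have h'eq : ∀ p, p ≠ m + 1 → h' p = h p := fun p hp => Function.update_of_ne hp _ _
    have h'top : h' (m + 1) = σ.comp g := Function.update_self _ _ _
    refine ⟨h', ?_, ?_, ?_⟩
    · rw [h'eq 0 (Nat.succ_ne_zero m).symm]; exact hh0
    · intro p hp
      rcases Nat.lt_succ_iff_lt_or_eq.mp hp with hp' | hp'
      · rw [h'eq (p + 1) (by omega), h'eq p (by omega)]; exact hhd p hp'
      · subst hp'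
        rw [h'top, h'eq p (by omega)]
        ext x
        simp only [ContinuousLinearMap.add_apply, ContinuousLinearMap.comp_apply,
          ContinuousLinearMap.id_apply]
        rw [hσ (g x), hgcoe x, sub_add_cancel]
    · intro p hp
      rcases Nat.lt_succ_iff_lt_or_eq.mp hp with hp' | hp'
      · rw [h'eq (p + 1) (by omega), h'eq p (by omega)]; exact hhh p hp'
      · subst hp'
        rw [h'top, h'eq p (by omega)]
        ext x
        simp only [ContinuousLinearMap.comp_apply, ContinuousLinearMap.zero_apply]
        have hg0 : g (h p x) = 0 := by
          apply Subtype.ext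
          rw [hgcoe]
          simp only [ZeroMemClass.coe_zero]
          cases p with
          | zero =>
            have := congrFun (congrArg DFunLike.coe hh0) x
            simp only [ContinuousLinearMap.comp_apply, ContinuousLinearMap.id_apply] at this
            rw [this, sub_self]
          | succ q =>
            have h4 : d (q + 1) (h (q + 1) x) = x - h q (d q x) := by
              have := congrFun (congrArg DFunLike.coe (hhd q (by omega))) x
              simp only [ContinuousLinearMap.add_apply, ContinuousLinearMap.comp_apply,
                ContinuousLinearMap.id_apply] at this
              rw [eq_sub_iff_add_eq]
              exact this
            rw [h4]
            simp only [map_sub]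
            have h5 : h (q + 1) (h q (d q x)) = 0 := by
              have := congrFun (congrArg DFunLike.coe (hhh q (by omega))) (d q x)
              simpa using this
            rw [h5, sub_zero, sub_self]
        rw [hg0, map_zero]
end

section
/- Let 0 → Xₙ →(dₙ) Xₙ₋₁ → ⋯ → X₁ →(d₁) X₀ → 0 be a complex of complex Banach spaces and bounded linear operators (d_p ∘ d_{p+1} = 0 for all p, with the conventions d₀ = 0 and d_{n+1} = 0), and let 0 ≤ k ≤ n. Suppose that for p = 0, …, k the subspace range(d_{p+1}) is closed and has finite codimension in ker(d_p) (where ker(d₀) = X₀), and that ker(d_p) admits a closed topological complement in X_p for p = 1, …, k+1. Then there exist bounded linear operators h_p : X_p → X_{p+1} for p = 0, …, k and bounded linear projections k_p : X_p → X_p with finite-dimensional range for p = 0, …, k such that, with the convention h₋₁ = 0, for every p = 0, …, k: d_{p+1} ∘ h_p + h_{p−1} ∘ d_p = Id_{X_p} − k_p, h_p ∘ h_{p−1} = 0, h_p ∘ k_p = 0, k_p ∘ d_{p+1} = 0, d_p ∘ k_p = 0, and k_p ∘ h_{p−1} = 0. -/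
open Submodule ContinuousLinearMap LinearMap

/-- A bounded right inverse on the range, when the kernel is complemented and range closed. -/
lemma secA {E F : Type*} [NormedAddCommGroup E] [NormedSpace ℂ E] [CompleteSpace E]
    [NormedAddCommGroup F] [NormedSpace ℂ F] [CompleteSpace F]
    (D : F →L[ℂ] E) (hcl : IsClosed (LinearMap.range D.toLinearMap : Set E))
    (hker : (LinearMap.ker D.toLinearMap).ClosedComplemented) :
    ∃ s : ↥(LinearMap.range D.toLinearMap) →L[ℂ] F, ∀ y : ↥(LinearMap.range D.toLinearMap), D (s y) = ↑y := by
  obtain ⟨P, hP⟩ := hker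
  set N : Submodule ℂ F := LinearMap.ker P.toLinearMap with hN
  haveI : CompleteSpace ↥N := (ContinuousLinearMap.isClosed_ker P).completeSpace_coe
  haveI : CompleteSpace ↥(LinearMap.range D.toLinearMap) := hcl.completeSpace_coe
  set T : ↥N →L[ℂ] ↥(LinearMap.range D.toLinearMap) :=
    (D.comp N.subtypeL).codRestrict (LinearMap.range D.toLinearMap) (fun x => ⟨_, rfl⟩) with hT
  have hinj : LinearMap.ker T.toLinearMap = ⊥ := by
    rw [LinearMap.ker_eq_bot']
    intro m hm
    have h1 : D (m : F) = 0 := congrArg Subtype.val hm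
    have h2 : P (m : F) = 0 := m.2
    have h3 := hP ⟨(m : F), h1⟩
    apply Subtype.ext
    have : ((P ((m : F) : F)) : F) = (m : F) := by rw [h3]
    rw [h2] at this
    simpa using this.symm
  have hsurj : LinearMap.range T.toLinearMap = ⊤ := by
    rw [LinearMap.range_eq_top]
    rintro ⟨y, w, rfl⟩
    have hmem : P (w - (P w : F)) = 0 := by
      have := hP (P w)
      rw [map_sub, this, sub_self]
    refine ⟨⟨w - (P w : F), hmem⟩, ?_⟩
    apply Subtype.ext
    have hker' : D ((P w : F)) = 0 := (P w).2
    simp [hT, ContinuousLinearMap.codRestrict, map_sub, hker']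
  set e := ContinuousLinearEquiv.ofBijective T hinj hsurj
  refine ⟨N.subtypeL.comp e.symm.toContinuousLinearMap, fun y => ?_⟩
  have : T (e.symm y) = y := by
    have := e.apply_symm_apply y
    simpa [e, ContinuousLinearEquiv.coeFn_ofBijective] using this
  have := congrArg Subtype.val this
  exact this


lemma projB {M : Type*} [NormedAddCommGroup M] [NormedSpace ℂ M]
    (R : Submodule ℂ M) (hR : IsClosed (R : Set M))
    (hfd : FiniteDimensional ℂ (M ⧸ R)) :
    ∃ q : M →L[ℂ] M, (∀ x ∈ R, q x = 0) ∧ (∀ x, x - q x ∈ R) ∧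
      FiniteDimensional ℂ ↥(LinearMap.range q.toLinearMap) := by
  haveI : IsClosed (R : Set M) := hR
  obtain ⟨σ, hσ⟩ := R.mkQ.exists_rightInverse_of_surjective
    (LinearMap.range_eq_top.2 R.mkQ_surjective)
  have hσc : Continuous σ := σ.continuous_of_finiteDimensional
  have hmkc : Continuous R.mkQ := continuous_quot_mk
  set q : M →L[ℂ] M := ⟨σ.comp R.mkQ, hσc.comp hmkc⟩ with hq
  have happ : ∀ x, q x = σ (R.mkQ x) := fun _ => rfl
  have hσid : ∀ z, R.mkQ (σ z) = z := fun z => congrArg (fun f => f z) (congrArg DFunLike.coe hσ)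
  refine ⟨q, ?_, ?_, ?_⟩
  · intro x hx
    rw [happ, show R.mkQ x = 0 from (Submodule.Quotient.mk_eq_zero R).2 hx, map_zero]
  · intro x
    rw [← Submodule.Quotient.mk_eq_zero R]
    have : R.mkQ (x - q x) = R.mkQ x - R.mkQ (q x) := map_sub _ _ _
    rw [show (Submodule.Quotient.mk (x - q x) : M ⧸ R) = R.mkQ (x - q x) from rfl, this,
      happ, hσid, sub_self]
  · have hle : LinearMap.range (q : M →L[ℂ] M).toLinearMap ≤ LinearMap.range σ := by
      rintro y ⟨x, rfl⟩; exact ⟨R.mkQ x, rfl⟩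
    haveI : FiniteDimensional ℂ ↥(LinearMap.range σ) := inferInstance
    exact Submodule.finiteDimensional_of_le hle

lemma stageC {E F : Type*} [NormedAddCommGroup E] [NormedSpace ℂ E] [CompleteSpace E]
    [NormedAddCommGroup F] [NormedSpace ℂ F] [CompleteSpace F]
    (D : F →L[ℂ] E) (π : E →L[ℂ] E) (K : Submodule ℂ E)
    (hπK : ∀ x, π x ∈ K) (hπid : ∀ x ∈ K, π x = x)
    (hrange : LinearMap.range D.toLinearMap ≤ K)
    (hKcl : IsClosed (K : Set E))
    (hDcl : IsClosed (LinearMap.range D.toLinearMap : Set E))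
    (hDker : (LinearMap.ker D.toLinearMap).ClosedComplemented)
    (hfd : FiniteDimensional ℂ (↥K ⧸ Submodule.comap K.subtype (LinearMap.range D.toLinearMap))) :
    ∃ (h : E →L[ℂ] F) (κ : E →L[ℂ] E),
      (∀ x, D (h x) = π x - κ x) ∧
      κ.comp κ = κ ∧
      FiniteDimensional ℂ ↥(LinearMap.range κ.toLinearMap) ∧
      (∀ x, κ x ∈ K) ∧
      κ.comp D = 0 ∧
      h.comp κ = 0 ∧
      (∀ x, π x = 0 → h x = 0 ∧ κ x = 0) ∧
      h.comp (D.comp h) = h := by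
  haveI : CompleteSpace ↥K := hKcl.completeSpace_coe
  obtain ⟨s, hs⟩ := secA D hDcl hDker
  set R' : Submodule ℂ ↥K := Submodule.comap K.subtype (LinearMap.range D.toLinearMap) with hR'
  have hR'cl : IsClosed (R' : Set ↥K) := by
    have : (R' : Set ↥K) = (Subtype.val : ↥K → E) ⁻¹' (LinearMap.range D.toLinearMap : Set E) := rfl
    rw [this]
    exact hDcl.preimage continuous_subtype_val
  obtain ⟨q, hq0, hqmem, hqfd⟩ := projB R' hR'cl hfd
  have hqq : ∀ m, q (q m) = q m := by
    intro m
    have h1 := hqmem m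
    have h2 := hq0 _ h1
    rw [map_sub] at h2
    have := sub_eq_zero.mp h2
    exact this.symm
  set ρ : E →L[ℂ] ↥K := π.codRestrict K hπK with hρ
  have hρapp : ∀ x, ((ρ x : E)) = π x := fun _ => rfl
  have hρK : ∀ (m : ↥K), ρ (m : E) = m := by
    intro m; apply Subtype.ext; rw [hρapp]; exact hπid _ m.2
  set κ : E →L[ℂ] E := K.subtypeL.comp (q.comp ρ) with hκ
  have hκapp : ∀ x, κ x = ((q (ρ x) : E)) := fun _ => rfl
  have hκK : ∀ x, κ x ∈ K := fun x => (q (ρ x)).2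
  have hmem : ∀ x, (π - κ) x ∈ LinearMap.range D.toLinearMap := by
    intro x
    have : (π - κ) x = ((ρ x - q (ρ x) : ↥K) : E) := by
      simp [hκapp, hρapp]
    rw [this]
    exact hqmem (ρ x)
  set w : E →L[ℂ] ↥(LinearMap.range D.toLinearMap) := (π - κ).codRestrict (LinearMap.range D.toLinearMap) hmem with hw
  have hwapp : ∀ x, ((w x : E)) = π x - κ x := fun _ => rfl
  set h : E →L[ℂ] F := s.comp w with hh
  have hDh : ∀ x, D (h x) = π x - κ x := by
    intro x
    have := hs (w x)
    rw [hwapp] at this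
    exact this
  -- ρ of κ
  have hρκ : ∀ x, ρ (κ x) = q (ρ x) := by
    intro x; rw [hκapp]; exact hρK _
  have hκκ : ∀ x, κ (κ x) = κ x := by
    intro x
    rw [hκapp (κ x), hρκ x, hqq]
    exact (hκapp x).symm
  refine ⟨h, κ, hDh, ?_, ?_, hκK, ?_, ?_, ?_, ?_⟩
  · ext x; exact hκκ x
  · haveI : FiniteDimensional ℂ ↥(Submodule.map K.subtype (LinearMap.range q.toLinearMap)) :=
      Module.Finite.map _ _
    refine Submodule.finiteDimensional_of_le (?_ :
      LinearMap.range κ.toLinearMap ≤ Submodule.map K.subtype (LinearMap.range q.toLinearMap))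
    rintro y ⟨x, rfl⟩
    exact ⟨q (ρ x), ⟨ρ x, rfl⟩, rfl⟩
  · ext y
    have hDyK : D y ∈ K := hrange ⟨y, rfl⟩
    have hρD : ρ (D y) = ⟨D y, hDyK⟩ := by
      apply Subtype.ext; rw [hρapp]; exact hπid _ hDyK
    have : κ (D y) = ((q ⟨D y, hDyK⟩ : E)) := by rw [hκapp, hρD]
    rw [ContinuousLinearMap.comp_apply, this, hq0 ⟨D y, hDyK⟩ ⟨y, rfl⟩]
    simp
  · ext x
    have h1 : π (κ x) = κ x := hπid _ (hκK x)
    have h2 : w (κ x) = 0 := by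
      apply Subtype.ext; rw [hwapp, h1, hκκ, sub_self]; rfl
    simp [hh, ContinuousLinearMap.comp_apply, h2]
  · intro x hx
    have hρ0 : ρ x = 0 := by apply Subtype.ext; rw [hρapp, hx]; rfl
    have hκ0 : κ x = 0 := by rw [hκapp, hρ0, map_zero]; rfl
    constructor
    · have hw0 : w x = 0 := by apply Subtype.ext; rw [hwapp, hx, hκ0, sub_zero]; rfl
      simp [hh, ContinuousLinearMap.comp_apply, hw0]
    · exact hκ0
  · ext x
    have hy : D (h x) = π x - κ x := hDh x
    set y := π x - κ x with hyy
    have hyK : y ∈ K := by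
      have : y = ((ρ x - q (ρ x) : ↥K) : E) := by simp [hyy, hκapp, hρapp]
      rw [this]; exact (ρ x - q (ρ x)).2
    have hρy : ρ y = ρ x - q (ρ x) := by
      apply Subtype.ext
      rw [hρapp, hπid _ hyK]
      simp [hyy, hκapp, hρapp]
    have hκy : κ y = 0 := by
      rw [hκapp, hρy, map_sub, hqq, sub_self]; rfl
    have hπy : π y = y := hπid _ hyK
    have hwy : w y = w x := by
      apply Subtype.ext; rw [hwapp, hwapp, hπy, hκy, sub_zero]
    calc h (D (h x)) = h y := by rw [hy]
    _ = s (w y) := rfl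
    _ = s (w x) := by rw [hwy]
    _ = h x := rfl

def Good {X : ℕ → Type*} [∀ p, NormedAddCommGroup (X p)] [∀ p, NormedSpace ℂ (X p)]
    (d : ∀ p : ℕ, X (p + 1) →L[ℂ] X p) (p : ℕ)
    (π κ : X p →L[ℂ] X p) (h : X p →L[ℂ] X (p + 1)) : Prop :=
  ((d p).comp h = π - κ) ∧
  κ.comp κ = κ ∧
  FiniteDimensional ℂ ↥(LinearMap.range κ.toLinearMap) ∧
  κ.comp (d p) = 0 ∧
  h.comp κ = 0 ∧
  (∀ x, π x = 0 → h x = 0 ∧ κ x = 0) ∧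
  h.comp ((d p).comp h) = h ∧
  π.comp (d p) = d p

lemma good_zero {X : ℕ → Type*} [∀ p, NormedAddCommGroup (X p)] [∀ p, NormedSpace ℂ (X p)]
    [∀ p, CompleteSpace (X p)]
    (d : ∀ p : ℕ, X (p + 1) →L[ℂ] X p)
    (hcl : IsClosed (LinearMap.range (d 0).toLinearMap : Set (X 0)))
    (hfc0 : FiniteDimensional ℂ (X 0 ⧸ LinearMap.range (d 0).toLinearMap))
    (hcp : (LinearMap.ker (d 0).toLinearMap).ClosedComplemented) :
    ∃ (κ' : X 0 →L[ℂ] X 0) (h' : X 0 →L[ℂ] X 1),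
      Good d 0 (ContinuousLinearMap.id ℂ (X 0)) κ' h' := by
  set K : Submodule ℂ (X 0) := ⊤ with hK
  have hfdtop : FiniteDimensional ℂ
      (↥K ⧸ Submodule.comap K.subtype (LinearMap.range (d 0).toLinearMap)) := by
    let e : (X 0) ≃ₗ[ℂ] ↥K := Submodule.topEquiv.symm
    have hmapeq : (LinearMap.range (d 0).toLinearMap).map (e : X 0 →ₗ[ℂ] ↥K) =
        Submodule.comap K.subtype (LinearMap.range (d 0).toLinearMap) := by
      ext m
      constructor
      · rintro ⟨y, hy, rfl⟩
        exact hy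
      · intro hm
        exact ⟨(m : X 0), hm, Subtype.ext rfl⟩
    exact Module.Finite.equiv (Submodule.Quotient.equiv _ _ e hmapeq)
  obtain ⟨h', κ', c1, c2, c3, c4, c5, c6, c7, c8⟩ :=
    stageC (d 0) (ContinuousLinearMap.id ℂ (X 0)) K
      (fun x => trivial) (fun x _ => rfl) le_top
      (by rw [hK, Submodule.top_coe]; exact isClosed_univ)
      hcl hcp hfdtop
  refine ⟨κ', h', ?_, c2, c3, c5, c6, c7, c8, ?_⟩
  · ext x
    simpa using c1 x
  · ext y; simp

lemma good_step {X : ℕ → Type*} [∀ p, NormedAddCommGroup (X p)] [∀ p, NormedSpace ℂ (X p)]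
    [∀ p, CompleteSpace (X p)]
    (d : ∀ p : ℕ, X (p + 1) →L[ℂ] X p) (p : ℕ)
    (π κ : X p →L[ℂ] X p) (h : X p →L[ℂ] X (p + 1))
    (hg : Good d p π κ h)
    (hcx : (d p).comp (d (p + 1)) = 0)
    (hcl : IsClosed (LinearMap.range (d (p + 1)).toLinearMap : Set (X (p + 1))))
    (hfd : FiniteDimensional ℂ
      (↥(LinearMap.ker (d p).toLinearMap) ⧸
        Submodule.comap (LinearMap.ker (d p).toLinearMap).subtype (LinearMap.range (d (p + 1)).toLinearMap)))
    (hcp : (LinearMap.ker (d (p + 1)).toLinearMap).ClosedComplemented) :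
    ∃ (κ' : X (p + 1) →L[ℂ] X (p + 1)) (h' : X (p + 1) →L[ℂ] X (p + 2)),
      Good d (p + 1) (ContinuousLinearMap.id ℂ (X (p + 1)) - h.comp (d p)) κ' h' ∧
      (d p).comp κ' = 0 := by
  obtain ⟨ga, gb, gc, gd, ge, gf, gg, gh⟩ := hg
  set π' : X (p + 1) →L[ℂ] X (p + 1) :=
    ContinuousLinearMap.id ℂ (X (p + 1)) - h.comp (d p) with hπ'
  have hπ'app : ∀ x, π' x = x - h (d p x) := fun _ => rfl
  have hcxapp : ∀ y, d p (d (p + 1) y) = 0 := by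
    intro y
    have := congrFun (congrArg DFunLike.coe hcx) y
    simpa using this
  have hdh : ∀ x, d p (h (d p x)) = d p x := by
    intro x
    have h1 := congrFun (congrArg DFunLike.coe ga) (d p x)
    have h2 := congrFun (congrArg DFunLike.coe gh) x
    have h3 := congrFun (congrArg DFunLike.coe gd) x
    simp only [ContinuousLinearMap.comp_apply, ContinuousLinearMap.sub_apply] at h1 h2 h3
    rw [h1, h2]
    simp only [ContinuousLinearMap.zero_apply] at h3
    rw [h3, sub_zero]
  have hπK : ∀ x, π' x ∈ LinearMap.ker (d p).toLinearMap := by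
    intro x
    rw [LinearMap.mem_ker, ContinuousLinearMap.coe_coe, hπ'app, map_sub, hdh, sub_self]
  have hπid : ∀ x ∈ LinearMap.ker (d p).toLinearMap, π' x = x := by
    intro x hx
    rw [hπ'app, show d p x = 0 from LinearMap.mem_ker.mp hx, map_zero, sub_zero]
  have hrange : LinearMap.range (d (p + 1)).toLinearMap ≤ LinearMap.ker (d p).toLinearMap := by
    rintro y ⟨z, rfl⟩
    rw [LinearMap.mem_ker]
    exact hcxapp z
  obtain ⟨h', κ', c1, c2, c3, c4, c5, c6, c7, c8⟩ :=
    stageC (d (p + 1)) π' (LinearMap.ker (d p).toLinearMap) hπK hπid hrange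
      (ContinuousLinearMap.isClosed_ker (d p)) hcl hcp hfd
  refine ⟨κ', h', ⟨?_, c2, c3, c5, c6, c7, c8, ?_⟩, ?_⟩
  · ext x
    simpa using c1 x
  · ext y
    show π' (d (p + 1) y) = d (p + 1) y
    rw [hπ'app, hcxapp, map_zero, sub_zero]
  · ext x
    exact LinearMap.mem_ker.mp (c4 x)

/-- Let `0 → Xₙ → ⋯ → X₀ → 0` be a complex of complex Banach spaces and
bounded linear operators (here `d p : X (p+1) → X p` plays the role of `d_{p+1}`, with
`d p = 0` for `p ≥ n` encoding the conventions `d₀ = 0`, `d_{n+1} = 0`), and let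
`0 ≤ k ≤ n`. Suppose that for `p = 0, …, k` the range of `d_{p+1}` is closed and of finite
codimension in `ker d_p` (for `p = 0`, `ker d₀ = X₀`), and that `ker d_p` admits a closed
topological complement for `p = 1, …, k+1`. Then there are bounded operators
`h_p : X_p → X_{p+1}` and bounded finite-rank projections `k_p : X_p → X_p`
(`p = 0, …, k`) with (conventions `h₋₁ = 0`, `d₀ = 0`): `d_{p+1}∘h_p + h_{p-1}∘d_p = Id − k_p`,
`h_p∘h_{p-1} = 0`, `h_p∘k_p = 0`, `k_p∘d_{p+1} = 0`, `d_p∘k_p = 0` and `k_p∘h_{p-1} = 0`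
for every `p = 0, …, k`. -/
theorem stmt11 (n k : ℕ) (hkn : k ≤ n)
    (X : ℕ → Type*) [∀ p, NormedAddCommGroup (X p)] [∀ p, NormedSpace ℂ (X p)]
    [∀ p, CompleteSpace (X p)]
    (d : ∀ p : ℕ, X (p + 1) →L[ℂ] X p)
    (hcomplex : ∀ p, (d p).comp (d (p + 1)) = 0)
    (hzero : ∀ p, n ≤ p → d p = 0)
    (hclosed : ∀ p, p ≤ k → IsClosed (LinearMap.range (d p : X (p + 1) →ₗ[ℂ] X p) : Set (X p)))
    (hfc0 : FiniteDimensional ℂ (X 0 ⧸ LinearMap.range (d 0 : X (0 + 1) →ₗ[ℂ] X 0)))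
    (hfc : ∀ p, p < k →
      FiniteDimensional ℂ
        (↥(LinearMap.ker (d p : X (p + 1) →ₗ[ℂ] X p)) ⧸
          Submodule.comap (LinearMap.ker (d p : X (p + 1) →ₗ[ℂ] X p)).subtype
            (LinearMap.range (d (p + 1) : X (p + 1 + 1) →ₗ[ℂ] X (p + 1)))))
    (hcompl : ∀ p, p ≤ k → Submodule.ClosedComplemented (LinearMap.ker (d p : X (p + 1) →ₗ[ℂ] X p))) :
    ∃ (h : ∀ p : ℕ, X p →L[ℂ] X (p + 1)) (κ : ∀ p : ℕ, X p →L[ℂ] X p),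
      (∀ p, p ≤ k → (κ p).comp (κ p) = κ p ∧
        FiniteDimensional ℂ (LinearMap.range (κ p : X p →ₗ[ℂ] X p))) ∧
      (d 0).comp (h 0) = ContinuousLinearMap.id ℂ (X 0) - κ 0 ∧
      (∀ p, p < k →
        (d (p + 1)).comp (h (p + 1)) + (h p).comp (d p) =
          ContinuousLinearMap.id ℂ (X (p + 1)) - κ (p + 1)) ∧
      (∀ p, p < k → (h (p + 1)).comp (h p) = 0) ∧
      (∀ p, p ≤ k → (h p).comp (κ p) = 0) ∧
      (∀ p, p ≤ k → (κ p).comp (d p) = 0) ∧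
      (∀ p, p < k → (d p).comp (κ (p + 1)) = 0) ∧
      (∀ p, p < k → (κ (p + 1)).comp (h p) = 0) := by
  have key : ∀ m : ℕ, ∃ (π : ∀ p, X p →L[ℂ] X p) (κ : ∀ p, X p →L[ℂ] X p)
      (h : ∀ p, X p →L[ℂ] X (p + 1)),
      π 0 = ContinuousLinearMap.id ℂ (X 0) ∧
      (∀ p, p < k → p < m →
        π (p + 1) = ContinuousLinearMap.id ℂ (X (p + 1)) - (h p).comp (d p)) ∧
      (∀ p, p < k → p < m → (d p).comp (κ (p + 1)) = 0) ∧
      (∀ p, p ≤ k → p ≤ m → Good d p (π p) (κ p) (h p)) := by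
    intro m
    induction m with
    | zero =>
      obtain ⟨κ0, h0, hg0⟩ := good_zero d (hclosed 0 (Nat.zero_le k)) hfc0
        (hcompl 0 (Nat.zero_le k))
      refine ⟨fun p => ContinuousLinearMap.id ℂ (X p),
        Function.update (fun p => (0 : X p →L[ℂ] X p)) 0 κ0,
        Function.update (fun p => (0 : X p →L[ℂ] X (p + 1))) 0 h0,
        rfl, ?_, ?_, ?_⟩
      · intro p _ hp; exact absurd hp (Nat.not_lt_zero p)
      · intro p _ hp; exact absurd hp (Nat.not_lt_zero p)
      · intro p _ hp
        have hp0 : p = 0 := Nat.le_zero.mp hp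
        subst hp0
        rw [Function.update_self, Function.update_self]
        exact hg0
    | succ m ih =>
      obtain ⟨π, κ, h, h0, hlink, hdk, hgood⟩ := ih
      by_cases hmk : m < k
      · have hm1k : m + 1 ≤ k := hmk
        obtain ⟨κ', h', hg', hdk'⟩ := good_step d m (π m) (κ m) (h m)
          (hgood m (Nat.le_of_lt hmk) (Nat.le_refl m))
          (hcomplex m) (hclosed (m + 1) hm1k) (hfc m hmk) (hcompl (m + 1) hm1k)
        refine ⟨Function.update π (m + 1)
            (ContinuousLinearMap.id ℂ (X (m + 1)) - (h m).comp (d m)),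
          Function.update κ (m + 1) κ', Function.update h (m + 1) h', ?_, ?_, ?_, ?_⟩
        · rw [Function.update_of_ne (Nat.succ_ne_zero m).symm]; exact h0
        · intro p hpk hpm
          rcases Nat.lt_succ_iff_lt_or_eq.mp hpm with hpm' | heq
          · rw [Function.update_of_ne (by omega : p + 1 ≠ m + 1),
              Function.update_of_ne (by omega : p ≠ m + 1)]
            exact hlink p hpk hpm'
          · subst heq
            rw [Function.update_self, Function.update_of_ne (by omega : p ≠ p + 1)]
        · intro p hpk hpm
          rcases Nat.lt_succ_iff_lt_or_eq.mp hpm with hpm' | heq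
          · rw [Function.update_of_ne (by omega : p + 1 ≠ m + 1)]
            exact hdk p hpk hpm'
          · subst heq
            rw [Function.update_self]
            exact hdk'
        · intro p hpk hpm
          rcases Nat.le_succ_iff.mp hpm with hpm' | heq
          · rw [Function.update_of_ne (by omega : p ≠ m + 1),
              Function.update_of_ne (by omega : p ≠ m + 1),
              Function.update_of_ne (by omega : p ≠ m + 1)]
            exact hgood p hpk hpm'
          · subst heq
            rw [Function.update_self, Function.update_self, Function.update_self]
            exact hg'
      · have hkm : k ≤ m := Nat.le_of_not_lt hmk
        refine ⟨π, κ, h, h0, ?_, ?_, ?_⟩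
        · intro p hpk _; exact hlink p hpk (lt_of_lt_of_le hpk hkm)
        · intro p hpk _; exact hdk p hpk (lt_of_lt_of_le hpk hkm)
        · intro p hpk _; exact hgood p hpk (le_trans hpk hkm)
  obtain ⟨π, κ, h, h0, hlink, hdk, hgood⟩ := key k
  refine ⟨h, κ, ?_, ?_, ?_, ?_, ?_, ?_, ?_, ?_⟩
  · intro p hpk
    exact ⟨(hgood p hpk hpk).2.1, (hgood p hpk hpk).2.2.1⟩
  · have := (hgood 0 (Nat.zero_le k) (Nat.zero_le k)).1
    rw [h0] at this
    rw [this]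
  · intro p hpk
    have hq := (hgood (p + 1) hpk hpk).1
    rw [hlink p hpk hpk] at hq
    rw [hq]
    abel
  · intro p hpk
    have hf := (hgood (p + 1) hpk hpk).2.2.2.2.2.1
    have hg := (hgood p (Nat.le_of_lt hpk) (Nat.le_of_lt hpk)).2.2.2.2.2.2.1
    ext x
    have hπ0 : (π (p + 1)) (h p x) = 0 := by
      rw [hlink p hpk hpk]
      have := congrFun (congrArg DFunLike.coe hg) x
      simp only [ContinuousLinearMap.comp_apply] at this
      simp only [ContinuousLinearMap.sub_apply, ContinuousLinearMap.coe_id', id_eq,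
        ContinuousLinearMap.comp_apply]
      rw [this, sub_self]
    have := (hf (h p x) hπ0).1
    simpa using this
  · intro p hpk
    exact (hgood p hpk hpk).2.2.2.2.1
  · intro p hpk
    exact (hgood p hpk hpk).2.2.2.1
  · intro p hpk
    exact hdk p hpk hpk
  · intro p hpk
    have hf := (hgood (p + 1) hpk hpk).2.2.2.2.2.1
    have hg := (hgood p (Nat.le_of_lt hpk) (Nat.le_of_lt hpk)).2.2.2.2.2.2.1
    ext x
    have hπ0 : (π (p + 1)) (h p x) = 0 := by
      rw [hlink p hpk hpk]
      have := congrFun (congrArg DFunLike.coe hg) x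
      simp only [ContinuousLinearMap.comp_apply] at this
      simp only [ContinuousLinearMap.sub_apply, ContinuousLinearMap.coe_id', id_eq,
        ContinuousLinearMap.comp_apply]
      rw [this, sub_self]
    have := (hf (h p x) hπ0).2
    simpa using this
end
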